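/- arXiv:1405.5304 — 13 statements merged into one kernel-verified Lean document; each statement's English description precedes it below -/
import Mathlib

section
/- If h is bounded from below, i.e. there is a real constant c such that (h u | u) ≥ c‖u‖² for all u ∈ D(h), then there exists a constant c₀ > 0 such that every z ∈ ℂ with |Im z| > |Re z| + c₀ belongs to ρ(h,k), i.e. p(z): D(h) → H is bijective with bounded inverse. -/
open Complex

noncomputable section

variable {H : Type*} [NormedAddCommGroup H] [InnerProductSpace ℂ H] [CompleteSpace H]

/-- The quadratic pencil `p(z) = h + z(2k - z) = h + 2z k - z²` acting on the domain of `h`. -/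
def pencil (h : H →ₗ.[ℂ] H) (k : H →L[ℂ] H) (z : ℂ) : h.domain →ₗ[ℂ] H :=
  h.toFun + (2 * z) • (k.toLinearMap.comp h.domain.subtype) - z ^ 2 • h.domain.subtype

/-- `p(z) : D(h) → H` is bijective with bounded inverse. -/
def PencilBijBdd (h : H →ₗ.[ℂ] H) (k : H →L[ℂ] H) (z : ℂ) : Prop :=
  Function.Bijective (pencil h k z) ∧
    ∃ C : ℝ, ∀ v : h.domain, ‖(v : H)‖ ≤ C * ‖pencil h k z v‖

set_option linter.unusedSectionVars false

lemma pencil_apply (h : H →ₗ.[ℂ] H) (k : H →L[ℂ] H) (z : ℂ) (u : h.domain) :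
    pencil h k z u = h u + (2 * z) • k (u : H) - z ^ 2 • (u : H) := by
  simp [pencil, LinearPMap.toFun_eq_coe]

lemma pencil_coercive (h : H →ₗ.[ℂ] H) (k : H →L[ℂ] H)
    (hsym : ∀ u v : h.domain, (inner ℂ (h u) (v : H) : ℂ) = inner ℂ (u : H) (h v))
    (hk : IsSelfAdjoint k)
    (c : ℝ) (hbelow : ∀ u : h.domain, c * ‖(u : H)‖ ^ 2 ≤ (inner ℂ (h u) (u : H) : ℂ).re)
    (z : ℂ) (hz : |z.re| + (2 * ‖k‖ + |c| + 1) < |z.im|) (u : h.domain) :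
    ‖(u : H)‖ ≤ ‖pencil h k z u‖ := by
  set x := z.re; set y := z.im
  have hc0 : (0:ℝ) ≤ 2 * ‖k‖ + |c| + 1 := by positivity
  have hkreal : (inner ℂ (k (u : H)) (u : H) : ℂ).im = 0 := by
    apply Complex.conj_eq_iff_im.mp
    rw [inner_conj_symm]
    exact (hk.isSymmetric _ _).symm
  have hhreal : (inner ℂ (h u) ((u : H)) : ℂ).im = 0 := by
    apply Complex.conj_eq_iff_im.mp
    rw [inner_conj_symm]
    exact (hsym u u).symm
  set r : ℝ := (inner ℂ (k (u : H)) (u : H) : ℂ).re with hr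
  have hinner : (inner ℂ (pencil h k z u) ((u:H)) : ℂ).re
      = (inner ℂ (h u) ((u:H)) : ℂ).re + 2 * x * r - (x^2 - y^2) * ‖(u:H)‖^2 := by
    rw [pencil_apply]
    have huu : (inner ℂ ((u:H)) ((u:H)) : ℂ) = ((‖(u:H)‖^2 : ℝ) : ℂ) :=
      by rw [inner_self_eq_norm_sq_to_K]; push_cast; exact rfl
    rw [inner_sub_left, inner_add_left, inner_smul_left, inner_smul_left, huu]
    simp only [Complex.sub_re, Complex.add_re, Complex.mul_re, Complex.mul_im, pow_two,
      Complex.conj_re, Complex.conj_im, Complex.ofReal_re, Complex.ofReal_im,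
      Complex.re_ofNat, Complex.im_ofNat, map_mul, Complex.ofReal_mul, RCLike.ofReal_re, RCLike.ofReal_im, hkreal]
    ring
  have hrabs : |r| ≤ ‖k‖ * ‖(u:H)‖^2 := by
    calc |r| ≤ ‖(inner ℂ (k (u : H)) (u : H) : ℂ)‖ := Complex.abs_re_le_norm _
    _ ≤ ‖k (u:H)‖ * ‖(u:H)‖ := by
        exact norm_inner_le_norm _ _
    _ ≤ ‖k‖ * ‖(u:H)‖ * ‖(u:H)‖ := by gcongr; exact k.le_opNorm _
    _ = ‖k‖ * ‖(u:H)‖^2 := by ring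
  have hkey : ‖(u:H)‖^2 ≤ (inner ℂ (pencil h k z u) ((u:H)) : ℂ).re := by
    rw [hinner]
    have h1 := hbelow u
    have hknn : (0:ℝ) ≤ ‖k‖ := norm_nonneg k
    have h2 : (2*‖k‖+|c|+1) * (|x| + |y|) ≤ y^2 - x^2 := by
      have hsq : (|y| - |x|) * (|y| + |x|) = y^2 - x^2 := by
        rw [← _root_.sq_abs x, ← _root_.sq_abs y]; ring
      nlinarith [abs_nonneg x, abs_nonneg y, hz]
    have hy1 : (1:ℝ) ≤ |y| := by nlinarith [abs_nonneg x, abs_nonneg c]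
    set n : ℝ := ‖(u:H)‖^2 with hn
    have hnn : (0:ℝ) ≤ n := sq_nonneg _
    have e1 : -(2 * ‖k‖ * |x| * n) ≤ 2 * x * r := by
      nlinarith [neg_abs_le (x*r), abs_mul x r,
        mul_le_mul_of_nonneg_left hrabs (abs_nonneg x), abs_nonneg x]
    have e2' : 2 * ‖k‖ * |x| + |c| + 1 ≤ y^2 - x^2 := by
      nlinarith [abs_nonneg x, abs_nonneg c]
    have e2 : (2 * ‖k‖ * |x| + |c| + 1) * n ≤ (y^2 - x^2) * n :=
      mul_le_mul_of_nonneg_right e2' hnn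
    have e3 : (0:ℝ) ≤ (c + |c|) * n :=
      mul_nonneg (by linarith [neg_abs_le c]) hnn
    nlinarith [e1, e2, e3, h1]
  have hcs : (inner ℂ (pencil h k z u) ((u:H)) : ℂ).re ≤ ‖pencil h k z u‖ * ‖(u:H)‖ := by
    calc (inner ℂ (pencil h k z u) ((u:H)) : ℂ).re
        ≤ |(inner ℂ (pencil h k z u) ((u:H)) : ℂ).re| := le_abs_self _
    _ ≤ ‖(inner ℂ (pencil h k z u) ((u:H)) : ℂ)‖ := Complex.abs_re_le_norm _
    _ ≤ ‖pencil h k z u‖ * ‖(u:H)‖ := by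
        exact norm_inner_le_norm _ _
  rcases eq_or_lt_of_le (norm_nonneg (u:H)) with h0 | h0
  · rw [← h0]; positivity
  · have hfin := hkey.trans hcs
    rw [pow_two] at hfin
    calc ‖(u:H)‖ = ‖(u:H)‖ * ‖(u:H)‖ / ‖(u:H)‖ := by field_simp
    _ ≤ ‖pencil h k z u‖ * ‖(u:H)‖ / ‖(u:H)‖ := by gcongr
    _ = ‖pencil h k z u‖ := by field_simp

lemma mem_domain_and_eq (h : H →ₗ.[ℂ] H) (hsa : IsSelfAdjoint h) (w w' : H)
    (hw : ∀ x : h.domain, (inner ℂ w' (x : H) : ℂ) = inner ℂ w (h x)) :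
    ∃ m : w ∈ h.domain, h ⟨w, m⟩ = w' := by
  have hd : Dense (h.domain : Set H) := hsa.dense_domain
  have hsa' : h.adjoint = h := hsa
  have hm : w ∈ h.adjoint.domain :=
    LinearPMap.mem_adjoint_domain_of_exists _ ⟨w', hw⟩
  have happ : h.adjoint ⟨w, hm⟩ = w' :=
    LinearPMap.adjoint_apply_eq hd ⟨w, hm⟩ (fun x => hw x)
  have hgraph : (w, w') ∈ h.adjoint.graph := by
    have := h.adjoint.mem_graph ⟨w, hm⟩
    rwa [happ] at this
  rw [hsa'] at hgraph
  rw [LinearPMap.mem_graph_iff] at hgraph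
  obtain ⟨y, hy1, hy2⟩ := hgraph
  have hy1' : (y : H) = w := hy1
  have hy2' : h y = w' := hy2
  refine ⟨hy1' ▸ y.2, ?_⟩
  have : (⟨w, hy1' ▸ y.2⟩ : h.domain) = y := Subtype.ext hy1'.symm
  rw [this, hy2']

/-- If `h` is bounded from below, then there is `c₀ > 0` such that every
`z` with `|Im z| > |Re z| + c₀` belongs to `ρ(h,k)`. -/
theorem pencil_bijective_of_im_large
    (h : H →ₗ.[ℂ] H) (hsa : IsSelfAdjoint h)
    (k : H →L[ℂ] H) (hk : IsSelfAdjoint k)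
    (c : ℝ) (hbelow : ∀ u : h.domain, c * ‖(u : H)‖ ^ 2 ≤ (inner ℂ (h u) (u : H) : ℂ).re) :
    ∃ c₀ : ℝ, 0 < c₀ ∧ ∀ z : ℂ, |z.re| + c₀ < |z.im| → PencilBijBdd h k z := by
  refine ⟨2 * ‖k‖ + |c| + 1, by positivity, ?_⟩
  intro z hz
  have hd : Dense (h.domain : Set H) := hsa.dense_domain
  have hsa' : h.adjoint = h := hsa
  have hsym : ∀ u v : h.domain, (inner ℂ (h u) (v : H) : ℂ) = inner ℂ (u : H) (h v) := by
    have hfa := LinearPMap.adjoint_isFormalAdjoint (T := h) hd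
    rw [hsa'] at hfa
    exact hfa
  have hco := pencil_coercive h k hsym hk c hbelow z hz
  have hzc : |(starRingEnd ℂ z).re| + (2 * ‖k‖ + |c| + 1) < |(starRingEnd ℂ z).im| := by
    simpa using hz
  have hcoc := pencil_coercive h k hsym hk c hbelow (starRingEnd ℂ z) hzc
  -- injectivity
  have hinj : Function.Injective (pencil h k z) := by
    intro v w hvw
    have h1 : pencil h k z (v - w) = 0 := by rw [map_sub, hvw, sub_self]
    have h2 := hco (v - w)
    rw [h1, norm_zero] at h2
    have : ((v - w : h.domain) : H) = 0 := norm_le_zero_iff.mp h2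
    have : (v - w : h.domain) = 0 := by exact_mod_cast this
    exact sub_eq_zero.mp this
  -- range is closed
  set K := LinearMap.range (pencil h k z) with hK
  have hclosed : IsClosed (K : Set H) := by
    apply isClosed_of_closure_subset
    intro y hy
    rw [mem_closure_iff_seq_limit] at hy
    obtain ⟨f, hfK, hft⟩ := hy
    choose u hu using hfK
    have hcauchy : CauchySeq (fun n => ((u n : H))) := by
      rw [Metric.cauchySeq_iff]
      have hfc := hft.cauchySeq
      rw [Metric.cauchySeq_iff] at hfc
      intro ε hε
      obtain ⟨N, hN⟩ := hfc ε hε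
      refine ⟨N, fun m hm n hn => ?_⟩
      have h1 := hco (u m - u n)
      have h2 : pencil h k z (u m - u n) = f m - f n := by
        rw [map_sub, hu, hu]
      rw [h2] at h1
      calc dist ((u m : H)) ((u n : H)) = ‖((u m - u n : h.domain) : H)‖ := by
            rw [dist_eq_norm]; norm_cast
      _ ≤ ‖f m - f n‖ := h1
      _ = dist (f m) (f n) := (dist_eq_norm _ _).symm
      _ < ε := hN m hm n hn
    obtain ⟨l, hl⟩ := cauchySeq_tendsto_of_complete hcauchy
    set v : H := y - (2 * z) • k l + z ^ 2 • l with hv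
    have hhu : ∀ n, h (u n) = f n - (2 * z) • k ((u n : H)) + z ^ 2 • ((u n : H)) := by
      intro n
      have := pencil_apply h k z (u n)
      rw [hu n] at this
      rw [this]; abel
    have hhtend : Filter.Tendsto (fun n => h (u n)) Filter.atTop (nhds v) := by
      simp_rw [hhu, hv]
      exact ((hft.sub (((k.continuous.tendsto l).comp hl).const_smul _)).add
        (hl.const_smul _))
    have hvw : ∀ x : h.domain, (inner ℂ v (x : H) : ℂ) = inner ℂ l (h x) := by
      intro x
      have t1 : Filter.Tendsto (fun n => (inner ℂ (h (u n)) ((x : H)) : ℂ))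
          Filter.atTop (nhds (inner ℂ v (x : H))) :=
        hhtend.inner tendsto_const_nhds
      have t2 : Filter.Tendsto (fun n => (inner ℂ ((u n : H)) (h x) : ℂ))
          Filter.atTop (nhds (inner ℂ l (h x))) :=
        hl.inner tendsto_const_nhds
      have heq : ∀ n, (inner ℂ (h (u n)) ((x : H)) : ℂ) = inner ℂ ((u n : H)) (h x) :=
        fun n => hsym (u n) x
      rw [Filter.tendsto_congr heq] at t1
      exact tendsto_nhds_unique t1 t2
    obtain ⟨lm, hlm⟩ := mem_domain_and_eq h hsa l v hvw
    refine ⟨⟨l, lm⟩, ?_⟩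
    rw [pencil_apply, hlm, hv]
    abel
  -- orthogonal complement of range is trivial
  have horth : Kᗮ = ⊥ := by
    rw [Submodule.eq_bot_iff]
    intro w hw
    rw [Submodule.mem_orthogonal] at hw
    have hw' : ∀ x : h.domain, (inner ℂ (pencil h k z x) w : ℂ) = 0 :=
      fun x => hw _ (LinearMap.mem_range_self _ x)
    set w' : H := (starRingEnd ℂ (-(2 * z))) • k w + (starRingEnd ℂ (z ^ 2)) • w with hw'def
    have hmem : ∀ x : h.domain, (inner ℂ w' (x : H) : ℂ) = inner ℂ w (h x) := by
      intro x
      have h0 : (inner ℂ w (pencil h k z x) : ℂ) = 0 := by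
        rw [← inner_conj_symm, hw' x, map_zero]
      rw [pencil_apply, inner_sub_right, inner_add_right, inner_smul_right,
        inner_smul_right] at h0
      have hksym : (inner ℂ w (k (x : H)) : ℂ) = inner ℂ (k w) ((x : H)) :=
        (hk.isSymmetric w (x : H)).symm
      rw [hksym] at h0
      rw [hw'def, inner_add_left, inner_smul_left, inner_smul_left]
      simp only [Complex.conj_conj]
      linear_combination -h0
    obtain ⟨wm, hwm⟩ := mem_domain_and_eq h hsa w w' hmem
    have hpz : pencil h k (starRingEnd ℂ z) ⟨w, wm⟩ = 0 := by
      rw [pencil_apply, hwm, hw'def]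
      simp only [map_neg, map_mul, Complex.conj_ofNat, map_pow]
      module
    have := hcoc ⟨w, wm⟩
    rw [hpz, norm_zero] at this
    exact norm_le_zero_iff.mp this
  have : CompleteSpace K := hclosed.completeSpace_coe
  have hKtop : K = ⊤ := Submodule.orthogonal_eq_bot_iff.mp horth
  have hsurj : Function.Surjective (pencil h k z) := by
    rw [← LinearMap.range_eq_top, ← hK, hKtop]
  refine ⟨⟨hinj, hsurj⟩, 1, fun v => ?_⟩
  rw [one_mul]
  exact hco v
end
end

section
/- Assume that h + c ≥ 0 in the quadratic form sense for some real constant c ≥ 0, i.e. (h u | u) ≥ −c‖u‖² for all u ∈ D(h), and let b > 1. Then for every z ∈ ℂ with Im z ≠ 0 such that p(z): D(h) → H is bijective with bounded inverse and |z|² ≥ b c / (b − 1), one has the resolvent bound ‖p(z)^{-1} u‖ ≤ (b / (|z| · |Im z|)) ‖u‖ for all u ∈ H. -/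
open Complex

noncomputable section

variable {H : Type*} [NormedAddCommGroup H] [InnerProductSpace ℂ H] [CompleteSpace H]

/-- If `h + c ≥ 0` in the form sense with `c ≥ 0` and `b > 1`, then for
`Im z ≠ 0` with `p(z)` boundedly invertible and `|z|² ≥ bc/(b-1)` one has
`‖p(z)⁻¹ u‖ ≤ (b / (|z|·|Im z|)) ‖u‖`. -/
theorem pencil_inverse_estimate
    (h : H →ₗ.[ℂ] H) (hsa : IsSelfAdjoint h)
    (k : H →L[ℂ] H) (hk : IsSelfAdjoint k)
    (c : ℝ) (hc : 0 ≤ c)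
    (hbelow : ∀ u : h.domain, -c * ‖(u : H)‖ ^ 2 ≤ (inner ℂ (h u) (u : H) : ℂ).re)
    (b : ℝ) (hb : 1 < b)
    (z : ℂ) (hz : z.im ≠ 0) (hbij : PencilBijBdd h k z)
    (hzlarge : b * c / (b - 1) ≤ ‖z‖ ^ 2) :
    ∀ (u : H) (v : h.domain), pencil h k z v = u →
      ‖(v : H)‖ ≤ b / (‖z‖ * |z.im|) * ‖u‖ := by
  intro u v huv
  have hznorm : 0 < ‖z‖ := by
    rw [norm_pos_iff]
    intro h0
    exact hz (by simp [h0])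
  have him : 0 < |z.im| := abs_pos.mpr hz
  have hb0 : (0:ℝ) < b := lt_trans one_pos hb
  by_cases hv0 : ‖(v : H)‖ = 0
  · rw [hv0]; positivity
  have hvpos : 0 < ‖(v : H)‖ := lt_of_le_of_ne (norm_nonneg _) (Ne.symm hv0)
  set N : ℝ := ‖(v : H)‖ with hNdef
  -- symmetry of h
  have hform : h.IsFormalAdjoint h := by
    have hd := hsa.dense_domain
    have := LinearPMap.adjoint_isFormalAdjoint (T := h) hd
    rwa [LinearPMap.isSelfAdjoint_def.mp hsa] at this
  -- A is real
  set A : ℝ := (inner ℂ (h v) ((v : H)) : ℂ).re with hAdef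
  have hA : (inner ℂ (h v) ((v : H)) : ℂ) = (A : ℂ) := by
    have h1 : (starRingEnd ℂ) (inner ℂ (h v) ((v : H)) : ℂ) = inner ℂ (h v) ((v : H)) := by
      rw [inner_conj_symm]
      exact (hform v v).symm
    rw [Complex.conj_eq_iff_re] at h1
    rw [← h1]
  set B : ℝ := (inner ℂ (k (v : H)) ((v : H)) : ℂ).re with hBdef
  have hB : (inner ℂ (k (v : H)) ((v : H)) : ℂ) = (B : ℂ) := by
    have hksym := (ContinuousLinearMap.isSelfAdjoint_iff_isSymmetric.mp hk)
    have h1 : (starRingEnd ℂ) (inner ℂ (k (v : H)) ((v : H)) : ℂ) = inner ℂ (k (v : H)) ((v : H)) := by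
      rw [inner_conj_symm]
      exact (hksym (v : H) (v : H)).symm
    rw [Complex.conj_eq_iff_re] at h1
    rw [← h1]
  set S : ℂ := inner ℂ u ((v : H)) with hSdef
  have hSformula : S = (A : ℂ) + (starRingEnd ℂ) (2 * z) * (B : ℂ)
      - (starRingEnd ℂ) (z ^ 2) * ((N : ℂ) ^ 2) := by
    rw [hSdef, ← huv]
    simp only [pencil, LinearMap.sub_apply, LinearMap.add_apply, LinearMap.smul_apply,
      LinearMap.comp_apply, Submodule.subtype_apply, ContinuousLinearMap.coe_coe]
    rw [inner_sub_left, inner_add_left, inner_smul_left, inner_smul_left]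
    have hA' : (inner ℂ (h.toFun v) ((v : H)) : ℂ) = (A : ℂ) := hA
    rw [hA', hB, inner_self_eq_norm_sq_to_K]
    norm_cast
  have key : (z * S).im = z.im * (A + ‖z‖ ^ 2 * N ^ 2) := by
    rw [hSformula]
    have hzn : ‖z‖ ^ 2 = z.re * z.re + z.im * z.im := by
      rw [Complex.sq_norm, Complex.normSq_apply]
    rw [hzn]
    simp [Complex.mul_im, Complex.mul_re, Complex.add_im, Complex.add_re, Complex.sub_im,
      Complex.sub_re, Complex.conj_re, Complex.conj_im, pow_two, Complex.ofReal_re,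
      Complex.ofReal_im]
    ring
  have hpos : ‖z‖ ^ 2 / b * N ^ 2 ≤ A + ‖z‖ ^ 2 * N ^ 2 := by
    have h1 : b * c ≤ ‖z‖ ^ 2 * (b - 1) := by
      rw [div_le_iff₀ (by linarith)] at hzlarge; exact hzlarge
    have h2 : -c * N ^ 2 ≤ A := hbelow v
    rw [div_mul_eq_mul_div, div_le_iff₀ hb0]
    nlinarith [sq_nonneg N]
  have hCS : ‖S‖ ≤ ‖u‖ * N := norm_inner_le_norm u ((v : H))
  have hchain : |z.im| * (A + ‖z‖ ^ 2 * N ^ 2) ≤ ‖z‖ * (‖u‖ * N) := by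
    have h1 : |(z * S).im| ≤ ‖z * S‖ := Complex.abs_im_le_norm (z * S)
    rw [key, abs_mul] at h1
    have h2 : |A + ‖z‖ ^ 2 * N ^ 2| = A + ‖z‖ ^ 2 * N ^ 2 := by
      apply _root_.abs_of_nonneg
      have : (0:ℝ) ≤ ‖z‖ ^ 2 / b * N ^ 2 := by positivity
      linarith
    rw [h2] at h1
    calc |z.im| * (A + ‖z‖ ^ 2 * N ^ 2) ≤ ‖z * S‖ := h1
      _ = ‖z‖ * ‖S‖ := norm_mul z S
      _ ≤ ‖z‖ * (‖u‖ * N) := by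
          exact mul_le_mul_of_nonneg_left hCS (norm_nonneg z)
  rw [div_mul_eq_mul_div, le_div_iff₀ (by positivity)]
  have hfinal : |z.im| * (‖z‖ ^ 2 / b * N ^ 2) ≤ ‖z‖ * (‖u‖ * N) :=
    le_trans (mul_le_mul_of_nonneg_left hpos (le_of_lt him)) hchain
  have hb' : |z.im| * (‖z‖ ^ 2 * N ^ 2) ≤ b * (‖z‖ * (‖u‖ * N)) := by
    have h3 := mul_le_mul_of_nonneg_left hfinal hb0.le
    calc |z.im| * (‖z‖ ^ 2 * N ^ 2) = b * (|z.im| * (‖z‖ ^ 2 / b * N ^ 2)) := by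
          field_simp
      _ ≤ b * (‖z‖ * (‖u‖ * N)) := h3
  nlinarith [mul_pos hznorm hvpos, mul_pos (mul_pos him hznorm) hvpos]
end
end

section
/- Assume h0 = h + k² ≥ 0 in the quadratic form sense, i.e. (h0 u | u) ≥ 0 for all u ∈ D(h), and assume there are constants 0 ≤ α < 1 and β ≥ 0 such that ‖k u‖² ≤ α (h0 u | u) + β ‖u‖² for all u ∈ D(h). Then: (i) h is bounded from below, namely (h u | u) ≥ −β ‖u‖² for all u ∈ D(h); and (ii) for every b > 1 and every z ∈ ℂ with Im z ≠ 0 such that p(z): D(h) → H is bijective with bounded inverse and |z|² ≥ b β / (b − 1), setting v := p(z)^{-1} u for u ∈ H, one has (1 − α)(h0 v | v) ≤ ( β b² / (|z|² (Im z)²) + b / (Im z)² ) ‖u‖². -/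
open Complex

noncomputable section

variable {H : Type*} [NormedAddCommGroup H] [InnerProductSpace ℂ H] [CompleteSpace H]

/-- The quadratic form `(h₀ u | u)` of `h₀ = h + k²` on the domain of `h`. -/
def h0Form (h : H →ₗ.[ℂ] H) (k : H →L[ℂ] H) (u : h.domain) : ℝ :=
  (inner ℂ (h u + k (k (u : H))) (u : H) : ℂ).re

/-- Purely real-arithmetic core of the resolvent estimate. -/
lemma pencil_arith (α β b x y Z U n t q : ℝ)
    (hα1 : α < 1) (hβ : 0 ≤ β) (hb : 1 < b) (hy : y ≠ 0)
    (hZ2 : Z ^ 2 = x ^ 2 + y ^ 2) (hZ : 0 < Z)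
    (hn0 : 0 ≤ n) (hU0 : 0 ≤ U) (hq : 0 ≤ q)
    (hE2 : y ^ 2 * (t + (x ^ 2 + y ^ 2) * n ^ 2) ^ 2 ≤ (x ^ 2 + y ^ 2) * (U * n) ^ 2)
    (hsplit : q ≤ t + α * q + β * n ^ 2)
    (hzb : b * β / (b - 1) ≤ Z ^ 2) :
    (1 - α) * q ≤ (β * b ^ 2 / (Z ^ 2 * y ^ 2) + b / y ^ 2) * U ^ 2 := by
  set Y : ℝ := |y| with hY_def
  have hY : 0 < Y := abs_pos.mpr hy
  have hY2 : Y ^ 2 = y ^ 2 := sq_abs _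
  set T : ℝ := t + (x ^ 2 + y ^ 2) * n ^ 2 with hT_def
  have hxy : 0 ≤ (x ^ 2 + y ^ 2) * n ^ 2 := by positivity
  have h7 : (1 - α) * q ≤ T + β * n ^ 2 := by rw [hT_def]; linarith
  have h3 : (Z ^ 2 - β) * n ^ 2 ≤ T := by
    have h0 : 0 ≤ (1 - α) * q := mul_nonneg (by linarith) hq
    rw [hT_def, hZ2]; linarith
  have hW : Z ^ 2 ≤ b * (Z ^ 2 - β) := by
    have h1 : b * β ≤ Z ^ 2 * (b - 1) := (div_le_iff₀ (by linarith)).mp hzb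
    linarith
  have hT0 : 0 ≤ T := by nlinarith [h3, hW, mul_pos hZ hZ, sq_nonneg n]
  have hTY : T * Y ≤ Z * U * n := by
    have h1 : (T * Y) ^ 2 ≤ (Z * U * n) ^ 2 := by
      have e : (T * Y) ^ 2 = y ^ 2 * T ^ 2 := by rw [← hY2]; ring
      rw [e]
      calc y ^ 2 * T ^ 2 ≤ (x ^ 2 + y ^ 2) * (U * n) ^ 2 := hE2
        _ = (Z * U * n) ^ 2 := by rw [← hZ2]; ring
    exact le_of_pow_le_pow_left₀ two_ne_zero (by positivity) h1
  have h8 : Z * Y * n ≤ b * U := by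
    rcases eq_or_lt_of_le hn0 with hn | hn
    · calc Z * Y * n = 0 := by rw [← hn]; ring
        _ ≤ b * U := mul_nonneg (by linarith) hU0
    · have h6 : Z ^ 2 * Y * n ^ 2 ≤ b * (Z * U * n) := by
        have e1 : (Z ^ 2 - β) * n ^ 2 * Y ≤ T * Y := mul_le_mul_of_nonneg_right h3 hY.le
        nlinarith [mul_nonneg (mul_nonneg
          (by linarith : (0:ℝ) ≤ b * (Z ^ 2 - β) - Z ^ 2) hY.le) (sq_nonneg n)]
      have hZn : 0 < Z * n := by positivity
      refine le_of_mul_le_mul_right ?_ hZn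
      linarith [h6]
  have e1 : T * Y * (Z * Y) ≤ Z * U * n * (Z * Y) :=
    mul_le_mul_of_nonneg_right hTY (by positivity)
  have e2 : Z * U * (Z * Y * n) ≤ Z * U * (b * U) :=
    mul_le_mul_of_nonneg_left h8 (by positivity)
  have h9' : T * (Z * Y ^ 2) ≤ b * (Z * U ^ 2) := by linarith [e1, e2]
  have h9 : T * (Z ^ 2 * Y ^ 2) ≤ b * (Z ^ 2 * U ^ 2) := by
    linarith [mul_le_mul_of_nonneg_left h9' hZ.le]
  have h10 : β * ((Z ^ 2 * Y ^ 2) * n ^ 2) ≤ β * (b ^ 2 * U ^ 2) := by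
    have h1 : (Z * Y * n) ^ 2 ≤ (b * U) ^ 2 := by
      apply pow_le_pow_left₀ (by positivity) h8
    linarith [mul_le_mul_of_nonneg_left h1 hβ]
  have hfinal : (1 - α) * q * (Z ^ 2 * Y ^ 2) ≤ (β * b ^ 2 + b * Z ^ 2) * U ^ 2 := by
    have h11 : (1 - α) * q * (Z ^ 2 * Y ^ 2) ≤ (T + β * n ^ 2) * (Z ^ 2 * Y ^ 2) :=
      mul_le_mul_of_nonneg_right h7 (by positivity)
    linarith [h9, h10, h11]
  have hpos2 : (0:ℝ) < Z ^ 2 * Y ^ 2 := by positivity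
  have hrw : (β * b ^ 2 / (Z ^ 2 * y ^ 2) + b / y ^ 2) * U ^ 2
      = ((β * b ^ 2 + b * Z ^ 2) * U ^ 2) / (Z ^ 2 * Y ^ 2) := by
    rw [hY2]
    field_simp
  rw [hrw, le_div_iff₀ hpos2]
  exact hfinal

/-- If `h₀ ≥ 0` and `‖ku‖² ≤ α (h₀u|u) + β‖u‖²` with `α < 1`, then `h ≥ -β`
and one has the weighted resolvent estimate
`(1-α)(h₀ p(z)⁻¹u | p(z)⁻¹u) ≤ (βb²/(|z|²(Im z)²) + b/(Im z)²)‖u‖²`. -/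
theorem pencil_h0_inverse_estimate
    (h : H →ₗ.[ℂ] H) (hsa : IsSelfAdjoint h)
    (k : H →L[ℂ] H) (hk : IsSelfAdjoint k)
    (hpos : ∀ u : h.domain, 0 ≤ h0Form h k u)
    (α β : ℝ) (hα0 : 0 ≤ α) (hα1 : α < 1) (hβ : 0 ≤ β)
    (hkbound : ∀ u : h.domain, ‖k (u : H)‖ ^ 2 ≤ α * h0Form h k u + β * ‖(u : H)‖ ^ 2) :
    (∀ u : h.domain, -β * ‖(u : H)‖ ^ 2 ≤ (inner ℂ (h u) (u : H) : ℂ).re) ∧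
    (∀ b : ℝ, 1 < b → ∀ z : ℂ, z.im ≠ 0 → PencilBijBdd h k z →
      b * β / (b - 1) ≤ ‖z‖ ^ 2 →
      ∀ (u : H) (v : h.domain), pencil h k z v = u →
        (1 - α) * h0Form h k v
          ≤ (β * b ^ 2 / (‖z‖ ^ 2 * z.im ^ 2) + b / z.im ^ 2) * ‖u‖ ^ 2) := by
  -- symmetry of `h`
  have hsym : ∀ x y : h.domain, (inner ℂ (h x) (y : H) : ℂ) = inner ℂ (x : H) (h y) := by
    have hd := hsa.dense_domain
    have hfa := LinearPMap.adjoint_isFormalAdjoint hd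
    rw [LinearPMap.isSelfAdjoint_def] at hsa
    rw [hsa] at hfa
    exact hfa
  have hksym : ∀ w₁ w₂ : H, (inner ℂ (k w₁) w₂ : ℂ) = inner ℂ w₁ (k w₂) := fun w₁ w₂ =>
    hk.isSymmetric.apply_clm w₁ w₂
  -- the form `h0Form` splits
  have hform : ∀ w : h.domain,
      h0Form h k w = (inner ℂ (h w) (w : H) : ℂ).re + ‖k (w : H)‖ ^ 2 := by
    intro w
    have h1 : (inner ℂ (h w + k (k (w : H))) (w : H) : ℂ)
        = inner ℂ (h w) (w : H) + inner ℂ (k (k (w : H))) (w : H) := inner_add_left _ _ _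
    have h2 : (inner ℂ (k (k (w : H))) (w : H) : ℂ) = inner ℂ (k (w : H)) (k (w : H)) :=
      hksym (k (w : H)) (w : H)
    have h3 : (inner ℂ (k (w : H)) (k (w : H)) : ℂ) = ((‖k (w : H)‖ : ℂ)) ^ 2 :=
      inner_self_eq_norm_sq_to_K _
    simp only [h0Form, h1, h2, h3, Complex.add_re, ← Complex.ofReal_pow, Complex.ofReal_re]
  -- `⟪h v, v⟫` is real
  have hreal_h : ∀ v : h.domain, (inner ℂ (h v) (v : H) : ℂ).im = 0 := by
    intro v
    have h1 := hsym v v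
    have h2 : (inner ℂ ((v : H)) (h v) : ℂ) = (starRingEnd ℂ) (inner ℂ (h v) (v : H)) :=
      (inner_conj_symm _ _).symm
    have h3 : (starRingEnd ℂ) (inner ℂ (h v) ((v : H)) : ℂ) = inner ℂ (h v) ((v : H)) := by
      rw [← h2, ← h1]
    exact (Complex.conj_eq_iff_im.mp h3)
  -- `⟪k v, v⟫` is real
  have hreal_k : ∀ w : H, (inner ℂ (k w) w : ℂ).im = 0 := by
    intro w
    have h1 := hksym w w
    have h2 : (inner ℂ w (k w) : ℂ) = (starRingEnd ℂ) (inner ℂ (k w) w) :=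
      (inner_conj_symm _ _).symm
    have h3 : (starRingEnd ℂ) (inner ℂ (k w) w : ℂ) = inner ℂ (k w) w := by
      rw [← h2, ← h1]
    exact (Complex.conj_eq_iff_im.mp h3)
  constructor
  · -- part (i)
    intro u
    have e := hform u
    have hq := hpos u
    have hkb := hkbound u
    nlinarith [mul_nonneg (by linarith : (0:ℝ) ≤ 1 - α) hq]
  · -- part (ii)
    intro b hb z hz _ hzb u v hv
    subst hv
    obtain ⟨t, ht⟩ : ∃ t : ℝ, (inner ℂ (h v) ((v : H)) : ℂ) = (t : ℂ) :=
      ⟨(inner ℂ (h v) ((v : H)) : ℂ).re,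
        Complex.ext rfl (by rw [Complex.ofReal_im, hreal_h v])⟩
    obtain ⟨s, hs⟩ : ∃ s : ℝ, (inner ℂ (k ((v : H))) ((v : H)) : ℂ) = (s : ℂ) :=
      ⟨(inner ℂ (k ((v : H))) ((v : H)) : ℂ).re,
        Complex.ext rfl (by rw [Complex.ofReal_im, hreal_k])⟩
    -- the complex identity
    have hc : (inner ℂ (pencil h k z v) ((v : H)) : ℂ) =
        (t : ℂ) + (starRingEnd ℂ) (2 * z) * (s : ℂ)
          - (starRingEnd ℂ) (z ^ 2) * ((‖(v : H)‖ : ℂ)) ^ 2 := by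
      rw [← ht, ← hs]
      simp [pencil, inner_add_left, inner_sub_left, inner_smul_left,
        inner_self_eq_norm_sq_to_K, map_ofNat]
      ring
    obtain ⟨cr, ci, hcrci⟩ : ∃ cr ci : ℝ,
        (inner ℂ (pencil h k z v) ((v : H)) : ℂ) = Complex.I * ci + cr := by
      refine ⟨(inner ℂ (pencil h k z v) ((v : H)) : ℂ).re,
        (inner ℂ (pencil h k z v) ((v : H)) : ℂ).im, ?_⟩
      apply Complex.ext <;> simp
    rw [hcrci] at hc
    have hre : cr = t + 2 * (z.re * s) - (z.re ^ 2 - z.im ^ 2) * ‖(v : H)‖ ^ 2 := by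
      have := congrArg Complex.re hc
      simp only [Complex.add_re, Complex.sub_re, Complex.mul_re, Complex.mul_im,
        Complex.I_re, Complex.I_im, Complex.ofReal_re, Complex.ofReal_im,
        Complex.conj_re, Complex.conj_im, map_mul, map_pow, map_ofNat, pow_two,
        Complex.re_ofNat, Complex.im_ofNat] at this
      linarith [this]
    have him : ci = -(2 * (z.im * s)) + 2 * (z.re * z.im) * ‖(v : H)‖ ^ 2 := by
      have := congrArg Complex.im hc
      simp only [Complex.add_im, Complex.sub_im, Complex.mul_re, Complex.mul_im,
        Complex.I_re, Complex.I_im, Complex.ofReal_re, Complex.ofReal_im,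
        Complex.conj_re, Complex.conj_im, map_mul, map_pow, map_ofNat, pow_two,
        Complex.re_ofNat, Complex.im_ofNat] at this
      linarith [this]
    -- Cauchy–Schwarz
    have hcs : cr ^ 2 + ci ^ 2 ≤ (‖pencil h k z v‖ * ‖(v : H)‖) ^ 2 := by
      have h1 : ‖(inner ℂ (pencil h k z v) ((v : H)) : ℂ)‖ ≤ ‖pencil h k z v‖ * ‖(v : H)‖ :=
        norm_inner_le_norm _ _
      have h2 : cr ^ 2 + ci ^ 2 = ‖(inner ℂ (pencil h k z v) ((v : H)) : ℂ)‖ ^ 2 := by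
        rw [hcrci, Complex.sq_norm, Complex.normSq_apply]
        simp
        ring
      rw [h2]
      exact pow_le_pow_left₀ (norm_nonneg _) h1 2
    have hE2 : z.im ^ 2 * (t + (z.re ^ 2 + z.im ^ 2) * ‖(v : H)‖ ^ 2) ^ 2
        ≤ (z.re ^ 2 + z.im ^ 2) * (‖pencil h k z v‖ * ‖(v : H)‖) ^ 2 := by
      have hM : z.im * (t + (z.re ^ 2 + z.im ^ 2) * ‖(v : H)‖ ^ 2)
          = z.im * cr + z.re * ci := by rw [hre, him]; ring
      have h2d : (z.im * cr + z.re * ci) ^ 2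
          ≤ (z.re ^ 2 + z.im ^ 2) * (cr ^ 2 + ci ^ 2) := by
        nlinarith [sq_nonneg (z.re * cr - z.im * ci)]
      calc z.im ^ 2 * (t + (z.re ^ 2 + z.im ^ 2) * ‖(v : H)‖ ^ 2) ^ 2
          = (z.im * (t + (z.re ^ 2 + z.im ^ 2) * ‖(v : H)‖ ^ 2)) ^ 2 := by ring
        _ = (z.im * cr + z.re * ci) ^ 2 := by rw [hM]
        _ ≤ (z.re ^ 2 + z.im ^ 2) * (cr ^ 2 + ci ^ 2) := h2d
        _ ≤ (z.re ^ 2 + z.im ^ 2) * (‖pencil h k z v‖ * ‖(v : H)‖) ^ 2 := by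
            apply mul_le_mul_of_nonneg_left hcs (by positivity)
    -- remaining data for the arithmetic lemma
    have hZ2 : ‖z‖ ^ 2 = z.re ^ 2 + z.im ^ 2 := by
      rw [Complex.sq_norm, Complex.normSq_apply]; ring
    have hZ : (0:ℝ) < ‖z‖ := norm_pos_iff.mpr (fun h0 => hz (by simp [h0]))
    have hsplit : h0Form h k v ≤ t + α * h0Form h k v + β * ‖(v : H)‖ ^ 2 := by
      have hfv := hform v
      have hkb := hkbound v
      have htre : (inner ℂ (h v) ((v : H)) : ℂ).re = t := by rw [ht, Complex.ofReal_re]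
      rw [htre] at hfv
      linarith
    exact pencil_arith α β b z.re z.im ‖z‖ ‖pencil h k z v‖ ‖(v : H)‖ t (h0Form h k v)
      hα1 hβ hb hz hZ2 hZ (norm_nonneg _) (norm_nonneg _) (hpos v) hE2 hsplit hzb
end
end

section
/- Let z ∈ ℂ with Im z ≠ 0, so that m := z − k is boundedly invertible on H (since k is bounded self-adjoint). Then for every v ∈ D(h), setting u := m^{-1}(p(z) v), the following identity holds: (1 / Im z) · Im( ( u | z · m^{-1}(h0 v) ) ) = (h0 v | v) + 2 Re( ( v | k · m^{-1}(h0 v) ) ) + ‖ m^{-1}(h0 v) ‖². -/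
open Complex

noncomputable section

variable {H : Type*} [NormedAddCommGroup H] [InnerProductSpace ℂ H] [CompleteSpace H]

/-- With `m = z - k` boundedly invertible (inverse `minv`), for `v ∈ D(h)` and
`u := m⁻¹(p(z)v)` one has
`(1/Im z)·Im (u | z·m⁻¹(h₀v)) = (h₀v|v) + 2Re (v | k m⁻¹(h₀v)) + ‖m⁻¹(h₀v)‖²`. -/
theorem pencil_h0_identity
    (h : H →ₗ.[ℂ] H) (hsa : IsSelfAdjoint h)
    (k : H →L[ℂ] H) (hk : IsSelfAdjoint k)
    (z : ℂ) (hz : z.im ≠ 0)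
    (minv : H →L[ℂ] H)
    (hminv : ∀ x : H, minv (z • x - k x) = x ∧ z • minv x - k (minv x) = x)
    (v : h.domain) :
    (1 / z.im) * (inner ℂ (minv (pencil h k z v)) (z • minv (h v + k (k (v : H)))) : ℂ).im
      = (inner ℂ (h v + k (k (v : H))) (v : H) : ℂ).re
        + 2 * (inner ℂ (v : H) (k (minv (h v + k (k (v : H))))) : ℂ).re
        + ‖minv (h v + k (k (v : H)))‖ ^ 2 := by
  have hd := hsa.dense_domain
  have hfa := LinearPMap.adjoint_isFormalAdjoint (T := h) hd
  rw [LinearPMap.isSelfAdjoint_def] at hsa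
  rw [hsa] at hfa
  have hsymm : ∀ x y : h.domain, (inner ℂ (h x) (y : H) : ℂ) = inner ℂ (x : H) (h y) := fun x y => hfa x y
  have hksym := hk.isSymmetric
  set vv : H := (v : H) with hvv
  set w : H := h v + k (k vv) with hw
  set a : H := minv w with ha
  have hka : k a = z • a - w := by
    have := (hminv w).2
    rw [← this]; abel
  have hp : pencil h k z v = w - (z • (z • vv - k vv) - k (z • vv - k vv)) := by
    simp only [pencil, LinearMap.sub_apply, LinearMap.add_apply, LinearMap.smul_apply,
      LinearMap.comp_apply, Submodule.subtype_apply, ContinuousLinearMap.coe_coe, hw,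
      map_sub, map_smul, smul_sub, smul_smul, LinearPMap.toFun_eq_coe]
    module
  have hu : minv (pencil h k z v) = a - (z • vv - k vv) := by
    rw [hp, map_sub, ← ha, (hminv (z • vv - k vv)).1]
  rw [hu]
  set A : ℂ := inner ℂ a a with hA
  set B : ℂ := inner ℂ vv a with hB
  set C : ℂ := inner ℂ vv w with hC
  have hexp : (inner ℂ (a - (z • vv - k vv)) (z • a) : ℂ)
      = z * (A - (starRingEnd ℂ) z * B + (z * B - C)) := by
    rw [inner_sub_left, inner_sub_left, inner_smul_left, inner_smul_right, inner_smul_right,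
      inner_smul_right]
    have h1 : (inner ℂ (k vv) a : ℂ) = inner ℂ vv (k a) := hksym vv a
    rw [h1, hka, inner_sub_right, inner_smul_right, ← hB, ← hC, ← hA]
    ring
  rw [hexp]
  have him : ∀ x : H, (inner ℂ x x : ℂ).im = 0 := fun x =>
    Complex.conj_eq_iff_im.mp (inner_conj_symm x x)
  have hAim : A.im = 0 := him a
  have hAre : A.re = ‖a‖ ^ 2 := by
    rw [hA, inner_self_eq_norm_sq_to_K]; norm_cast
  have hCim : C.im = 0 := by
    rw [hC, hw, inner_add_right]
    have h1 : (inner ℂ vv (h v) : ℂ).im = 0 :=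
      Complex.conj_eq_iff_im.mp (by rw [inner_conj_symm]; exact hsymm v v)
    have h2 : (inner ℂ vv (k (k vv)) : ℂ).im = 0 := by
      have e : (inner ℂ vv (k (k vv)) : ℂ) = inner ℂ (k vv) (k vv) := (hksym vv (k vv)).symm
      rw [e]; exact him (k vv)
    simp [h1, h2]
  have hrhs1 : (inner ℂ w vv : ℂ).re = C.re := by
    rw [← inner_conj_symm w vv, ← hC, Complex.conj_re]
  have hrhs2 : (inner ℂ vv (k a) : ℂ) = z * B - C := by
    rw [hka, inner_sub_right, inner_smul_right, ← hB, ← hC]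
  rw [hrhs1, hrhs2, ← hAre]
  field_simp
  simp only [Complex.mul_im, Complex.mul_re, Complex.sub_re, Complex.sub_im, Complex.add_re,
    Complex.add_im, Complex.conj_re, Complex.conj_im, hAim, hCim]
  ring
end
end

section
/- Assume (h0 u | u) ≥ 0 for all u ∈ D(h). Let z ∈ ℂ with Im z ≠ 0 be such that p(z): D(h) → H is bijective with bounded inverse, set m := z − k (boundedly invertible), and suppose there are constants a ≥ 0 and 0 ≤ b < 1 such that for all w, v ∈ D(h): |( w | z · m^{-1}(h0 v) )| ≤ a · (h0 w | w)^{1/2} (h0 v | v)^{1/2}, and 2 |( v | k · m^{-1}(h0 v) )| ≤ b · (h0 v | v). Then for every u ∈ D(h), setting v := p(z)^{-1}( (z − k) u ) ∈ D(h), one has (1 − b) · (h0 v | v)^{1/2} ≤ (a / |Im z|) · (h0 u | u)^{1/2}. -/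
open Complex

noncomputable section

variable {H : Type*} [NormedAddCommGroup H] [InnerProductSpace ℂ H] [CompleteSpace H]

/-- Under the stated bounds on `z m⁻¹` and `k m⁻¹` on the homogeneous scale,
`v := p(z)⁻¹((z-k)u)` satisfies `(1-b)(h₀v|v)^{1/2} ≤ (a/|Im z|)(h₀u|u)^{1/2}`. -/
theorem pencil_homogeneous_estimate
    (h : H →ₗ.[ℂ] H) (hsa : IsSelfAdjoint h)
    (k : H →L[ℂ] H) (hk : IsSelfAdjoint k)
    (hpos : ∀ u : h.domain, 0 ≤ h0Form h k u)
    (z : ℂ) (hz : z.im ≠ 0) (hbij : PencilBijBdd h k z)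
    (minv : H →L[ℂ] H)
    (hminv : ∀ x : H, minv (z • x - k x) = x ∧ z • minv x - k (minv x) = x)
    (a b : ℝ) (ha : 0 ≤ a) (hb0 : 0 ≤ b) (hb1 : b < 1)
    (hbound₁ : ∀ w v : h.domain,
      ‖(inner ℂ (w : H) (z • minv (h v + k (k (v : H)))) : ℂ)‖
        ≤ a * Real.sqrt (h0Form h k w) * Real.sqrt (h0Form h k v))
    (hbound₂ : ∀ v : h.domain,
      2 * ‖(inner ℂ (v : H) (k (minv (h v + k (k (v : H))))) : ℂ)‖ ≤ b * h0Form h k v) :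
    ∀ u v : h.domain, pencil h k z v = z • (u : H) - k (u : H) →
      (1 - b) * Real.sqrt (h0Form h k v)
        ≤ a / |z.im| * Real.sqrt (h0Form h k u) := by
  -- symmetry of `h`
  have hsymm : ∀ x y : h.domain, (inner ℂ (h x) (y : H) : ℂ) = inner ℂ (x : H) (h y) := by
    have e : h.adjoint = h := hsa
    have hfa := LinearPMap.adjoint_isFormalAdjoint hsa.dense_domain (T := h)
    rw [e] at hfa
    exact hfa
  have hksymm : ∀ x y : H, (inner ℂ (k x) y : ℂ) = inner ℂ x (k y) := hk.isSymmetric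
  intro u v hv
  set U : H := (u : H) with hU
  set V : H := (v : H) with hV
  set t : H := h v + k (k V) with ht
  set y : H := minv t with hy
  -- the pencil equation, unfolded
  have hv' : h v + (2 * z) • k V - z ^ 2 • V = z • U - k U := by
    have := hv
    simpa [pencil, LinearMap.sub_apply, LinearMap.add_apply, LinearMap.smul_apply,
      LinearMap.comp_apply, Submodule.subtype_apply] using this
  -- y = U + z•V - kV
  have hy2 : y = U + z • V - k V := by
    have h1 := (hminv (U + z • V - k V)).1
    have h2 : z • (U + z • V - k V) - k (U + z • V - k V) = t := by
      have hhv : (h v : H) = z • U - k U - (2 * z) • k V + z ^ 2 • V := by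
        rw [← hv']; abel
      rw [ht, hhv]
      simp only [map_add, map_smul, map_sub]
      module
    rw [h2] at h1
    exact h1
  set Qv : ℝ := h0Form h k v with hQv
  set Qu : ℝ := h0Form h k u with hQu
  -- (V | t) = Qv as a real number
  have hreal : (inner ℂ t V : ℂ) = inner ℂ V t := by
    rw [ht]
    have h2 : (inner ℂ (k (k V)) V : ℂ) = inner ℂ V (k (k V)) := by
      rw [hksymm (k V) V, hksymm V (k V)]
    simp only [inner_add_left, inner_add_right, hsymm v v, h2]
    exact congrArg (· + inner ℂ V (k (k V))) (hsymm v v)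
  have hQvc : (inner ℂ V t : ℂ) = (Qv : ℂ) := by
    have hconj : (starRingEnd ℂ) (inner ℂ V t : ℂ) = inner ℂ V t := by
      rw [inner_conj_symm, hreal]
    have him : (inner ℂ V t : ℂ).im = 0 := Complex.conj_eq_iff_im.mp hconj
    have hre : (inner ℂ V t : ℂ).re = Qv := by
      rw [hQv, h0Form, ← ht, hreal]
    apply Complex.ext <;> simp [him, hre]
  set B : ℂ := inner ℂ V (k y) with hB
  set c1 : ℂ := inner ℂ V y with hc1
  set n : ℝ := ‖y‖ ^ 2 with hn
  -- z * c1 = Qv + B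
  have hi1 : z * c1 = (Qv : ℂ) + B := by
    have := (hminv t).2
    rw [← hy] at this
    have h3 : (inner ℂ V (z • y - k y) : ℂ) = inner ℂ V t := by rw [this]
    rw [inner_sub_right, inner_smul_right, hQvc] at h3
    rw [← hB, ← hc1] at h3
    linear_combination h3
  -- (U | y) = n - conj z * c1 + B
  have hi2 : (inner ℂ U y : ℂ) = (n : ℂ) - (starRingEnd ℂ) z * c1 + B := by
    have hU2 : U = y - z • V + k V := by rw [hy2]; abel
    rw [hU2, inner_add_left, inner_sub_left, inner_smul_left, hksymm V y]
    rw [← hB, ← hc1]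
    have : (inner ℂ y y : ℂ) = (n : ℂ) := by
      rw [inner_self_eq_norm_sq_to_K, hn]
      norm_cast
    rw [this]
  set W : ℂ := inner ℂ U (z • y) with hW
  have hWeq : W = z * (n : ℂ) - (starRingEnd ℂ) z * ((Qv : ℂ) + B) + z * B := by
    rw [hW, inner_smul_right, hi2, ← hi1]
    ring
  have hWim : W.im = z.im * (n + Qv + 2 * B.re) := by
    rw [hWeq]
    simp only [Complex.add_im, Complex.sub_im, Complex.mul_im, Complex.conj_re, Complex.conj_im,
      Complex.ofReal_re, Complex.ofReal_im, Complex.add_re, Complex.ofReal_re]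
    ring
  -- bounds
  have hQvpos : 0 ≤ Qv := hpos v
  have hQupos : 0 ≤ Qu := hpos u
  have hB2 : 2 * ‖B‖ ≤ b * Qv := by
    have := hbound₂ v
    rw [← hV, ← ht, ← hy, ← hB, ← hQv] at this
    exact this
  have hBre : |B.re| ≤ ‖B‖ := by
    exact Complex.abs_re_le_norm B
  have hnpos : 0 ≤ n := by rw [hn]; positivity
  have hs : (1 - b) * Qv ≤ n + Qv + 2 * B.re := by
    have := neg_abs_le B.re
    nlinarith
  have hW1 : ‖W‖ ≤ a * Real.sqrt Qu * Real.sqrt Qv := by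
    have := hbound₁ u v
    rw [← hU, ← hV, ← ht, ← hy, ← hW, ← hQu, ← hQv] at this
    exact this
  have key : |z.im| * ((1 - b) * Qv) ≤ a * Real.sqrt Qu * Real.sqrt Qv := by
    have h1 : |z.im| * ((1 - b) * Qv) ≤ |z.im| * (n + Qv + 2 * B.re) :=
      mul_le_mul_of_nonneg_left hs (abs_nonneg _)
    have h2 : |z.im| * (n + Qv + 2 * B.re) = |W.im| := by
      rw [hWim, abs_mul]
      congr 1
      exact (_root_.abs_of_nonneg (by nlinarith)).symm
    have h3 : |W.im| ≤ ‖W‖ := by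
      exact Complex.abs_im_le_norm W
    linarith
  -- conclude
  have hzim : 0 < |z.im| := abs_pos.mpr hz
  rcases eq_or_lt_of_le hQvpos with hQv0 | hQv0
  · have h0 : Real.sqrt Qv = 0 := by rw [← hQv0, Real.sqrt_zero]
    rw [h0, mul_zero]
    positivity
  · have hsv : 0 < Real.sqrt Qv := Real.sqrt_pos.mpr hQv0
    have hQveq : Qv = Real.sqrt Qv * Real.sqrt Qv := (Real.mul_self_sqrt hQvpos).symm
    rw [div_mul_eq_mul_div, le_div_iff₀ hzim]
    have hmss : Real.sqrt Qv * Real.sqrt Qv = Qv := Real.mul_self_sqrt hQvpos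
    refine le_of_mul_le_mul_right ?_ hsv
    have e2 : (1 - b) * Real.sqrt Qv * |z.im| * Real.sqrt Qv = |z.im| * ((1 - b) * Qv) := by
      linear_combination ((1 - b) * |z.im|) * hmss
    rw [e2]
    exact key
end
end

section
/- Assume (h0 u | u) ≥ 0 for all u ∈ D(h) (hyperbolicity assumption (A1)), and let ε > 0. Then there exists a constant C > 0 such that for every z ∈ ℂ with Im z ≠ 0, |z| ≥ (1 + ε)‖k‖ (operator norm of k) and such that p(z): D(h) → H is bijective with bounded inverse, one has for all u ∈ H, with v := p(z)^{-1} u: (i) ‖v‖ ≤ C ‖u‖ / (|z| · |Im z|), and (ii) (h0 v | v) ≤ C² ‖u‖² / (Im z)². -/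
open Complex

noncomputable section

variable {H : Type*} [NormedAddCommGroup H] [InnerProductSpace ℂ H] [CompleteSpace H]

private lemma pencil_arith2 {s r U Cc : ℝ} (hs : s ≠ 0) (hr : r ≠ 0) :
    s * ((Cc * U / (s * r)) * U) / r = Cc * U^2 / r^2 := by
  field_simp

private lemma pencil_arith1 {c s m r U : ℝ} (hs : 0 < s) (hm : 0 < m)
    (key : c * (s^2 * m^2) * r ≤ s * (m * U)) : c * (m * (s * r)) ≤ U := by
  nlinarith [mul_pos hs hm]

set_option maxHeartbeats 1000000 in
/-- Under (A1), for `|z| ≥ (1+ε)‖k‖` and `Im z ≠ 0` the inverse of the pencil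
satisfies `‖p(z)⁻¹u‖ ≤ C‖u‖/(|z||Im z|)` and `(h₀ p(z)⁻¹u | p(z)⁻¹u) ≤ C²‖u‖²/(Im z)²`. -/
theorem pencil_basic_estimates
    (h : H →ₗ.[ℂ] H) (hsa : IsSelfAdjoint h)
    (k : H →L[ℂ] H) (hk : IsSelfAdjoint k)
    (hpos : ∀ u : h.domain, 0 ≤ h0Form h k u)
    (ε : ℝ) (hε : 0 < ε) :
    ∃ C : ℝ, 0 < C ∧ ∀ z : ℂ, z.im ≠ 0 → (1 + ε) * ‖k‖ ≤ ‖z‖ → PencilBijBdd h k z →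
      ∀ (u : H) (v : h.domain), pencil h k z v = u →
        ‖(v : H)‖ ≤ C * ‖u‖ / (‖z‖ * |z.im|) ∧
        h0Form h k v ≤ C ^ 2 * ‖u‖ ^ 2 / z.im ^ 2 := by
  -- symmetry of h
  have hsym : ∀ x y : h.domain, (inner ℂ (h x) (y : H) : ℂ) = inner ℂ (x : H) (h y) := by
    have hd := hsa.dense_domain
    rw [LinearPMap.isSelfAdjoint_def] at hsa
    have H1 := LinearPMap.adjoint_isFormalAdjoint hd
    rw [hsa] at H1
    exact H1
  have hksym : ∀ x y : H, (inner ℂ (k x) y : ℂ) = inner ℂ x (k y) := fun x y => by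
    rw [← hk.adjoint_eq, ContinuousLinearMap.adjoint_inner_left, hk.adjoint_eq]
  -- constants
  have hε1 : (0:ℝ) < (1+ε)^2 := by positivity
  set c : ℝ := 1 - 1/(1+ε)^2 with hc_def
  have hc : 0 < c := by
    rw [hc_def, sub_pos, div_lt_one hε1]
    nlinarith
  have hc1 : c ≤ 1 := by
    rw [hc_def]
    have : 0 < 1/(1+ε)^2 := by positivity
    linarith
  refine ⟨1/c, by positivity, ?_⟩
  set C : ℝ := 1/c with hC_def
  have hC0 : 0 < C := by positivity
  have hC1 : 1 ≤ C := by
    rw [hC_def, le_div_iff₀ hc, one_mul]; exact hc1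
  clear_value C c
  intro z him hnorm _ u v heq
  -- basic positivity
  have hr : (0:ℝ) < |z.im| := abs_pos.mpr him
  have hrs : |z.im| ≤ ‖z‖ := by
    exact Complex.abs_im_le_norm z
  have hs : (0:ℝ) < ‖z‖ := lt_of_lt_of_le hr hrs
  -- the real quantities
  set a : ℝ := (inner ℂ ((v : H)) (h v) : ℂ).re with ha_def
  set b : ℝ := (inner ℂ ((v : H)) (k (v : H)) : ℂ).re with hb_def
  set n : ℝ := ‖(v : H)‖ ^ 2 with hn_def
  set W : ℂ := inner ℂ ((v : H)) u with hW_def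
  have ha : (inner ℂ ((v : H)) (h v) : ℂ) = (a : ℂ) := by
    have h1 : (inner ℂ ((v : H)) (h v) : ℂ) = starRingEnd ℂ (inner ℂ ((v : H)) (h v) : ℂ) := by
      rw [inner_conj_symm]; exact (hsym v v).symm
    rw [Complex.conj_eq_iff_re.mp h1.symm]
  have hb : (inner ℂ ((v : H)) (k (v : H)) : ℂ) = (b : ℂ) := by
    have h1 : (inner ℂ ((v : H)) (k (v:H)) : ℂ) = starRingEnd ℂ (inner ℂ ((v : H)) (k (v:H)) : ℂ) := by
      rw [inner_conj_symm]; exact (hksym (v:H) (v:H)).symm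
    rw [Complex.conj_eq_iff_re.mp h1.symm]
  have hn : (inner ℂ ((v : H)) ((v : H)) : ℂ) = (n : ℂ) := by
    rw [inner_self_eq_norm_sq_to_K]; norm_cast
  have hW : W = (a : ℂ) + 2 * z * b - z ^ 2 * n := by
    rw [hW_def, ← heq]
    have hp : pencil h k z v = h v + (2*z) • k (v : H) - z^2 • (v : H) := by simp [pencil]
    rw [hp, inner_sub_right, inner_add_right, inner_smul_right, inner_smul_right, ha, hb, hn]
  have hWle : ‖W‖ ≤ ‖(v:H)‖ * ‖u‖ := norm_inner_le_norm _ _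
  clear_value a b n W
  -- real and imaginary parts
  have h1 : W.re = a + 2*z.re*b - (z.re^2 - z.im^2)*n := by
    rw [hW]; simp only [Complex.add_re, Complex.sub_re, Complex.mul_re, Complex.mul_im,
      Complex.ofReal_re, Complex.ofReal_im, Complex.re_ofNat, Complex.im_ofNat, pow_two]; ring
  have h2 : W.im = 2*z.im*b - 2*z.re*z.im*n := by
    rw [hW]; simp only [Complex.add_im, Complex.sub_im, Complex.mul_re, Complex.mul_im,
      Complex.ofReal_re, Complex.ofReal_im, Complex.re_ofNat, Complex.im_ofNat, pow_two]; ring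
  -- key identity
  have hzsq : ‖z‖^2 = z.re^2 + z.im^2 := by
    rw [Complex.sq_norm, Complex.normSq_apply]; ring
  have keyid : a + ‖z‖^2 * n = W.re - (z.re/z.im) * W.im := by
    rw [hzsq]; field_simp; rw [h1, h2]; ring
  -- bound on the right-hand side
  have habs : |W.re - (z.re/z.im) * W.im| ≤ ‖z‖ * ‖W‖ / |z.im| := by
    have key : W.re - (z.re/z.im) * W.im = -((starRingEnd ℂ z * W).im) / z.im := by
      simp only [Complex.mul_im, Complex.conj_re, Complex.conj_im]; field_simp; ring
    rw [key, abs_div]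
    gcongr
    calc |(-((starRingEnd ℂ z * W).im))| = |((starRingEnd ℂ z * W).im)| := abs_neg _
      _ ≤ ‖starRingEnd ℂ z * W‖ := Complex.abs_im_le_norm _
      _ = ‖z‖ * ‖W‖ := by rw [norm_mul, RCLike.norm_conj]
  have Hbound : a + ‖z‖^2 * n ≤ ‖z‖ * (‖(v:H)‖ * ‖u‖) / |z.im| := by
    calc a + ‖z‖^2 * n ≤ |W.re - (z.re/z.im) * W.im| := keyid.le.trans (le_abs_self _)
      _ ≤ ‖z‖ * ‖W‖ / |z.im| := habs
      _ ≤ ‖z‖ * (‖(v:H)‖ * ‖u‖) / |z.im| := by gcongr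
  -- lower bound on a from (A1)
  have hh0 : h0Form h k v = a + ‖k (v:H)‖^2 := by
    rw [h0Form, inner_add_left]
    have e1 : (inner ℂ (h v) ((v:H)) : ℂ) = (a:ℂ) := by
      rw [← inner_conj_symm, ha]; simp
    have e2 : (inner ℂ (k (k (v:H))) ((v:H)) : ℂ) = ((‖k (v:H)‖^2 : ℝ) : ℂ) := by
      rw [hksym, inner_self_eq_norm_sq_to_K]; norm_cast
    rw [e1, e2, Complex.add_re, Complex.ofReal_re, Complex.ofReal_re]
  have hkz : ‖k‖ ≤ ‖z‖/(1+ε) := by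
    rw [le_div_iff₀ (by linarith)]
    linarith [hnorm]
  have hkv : ‖k (v:H)‖ ≤ ‖z‖/(1+ε) * ‖(v:H)‖ := by
    calc ‖k (v:H)‖ ≤ ‖k‖ * ‖(v:H)‖ := k.le_opNorm _
      _ ≤ ‖z‖/(1+ε) * ‖(v:H)‖ := by gcongr
  have hkv2 : ‖k (v:H)‖^2 ≤ ‖z‖^2/(1+ε)^2 * n := by
    rw [hn_def]
    have h0' : (0:ℝ) ≤ ‖z‖/(1+ε) * ‖(v:H)‖ := by positivity
    calc ‖k (v:H)‖^2 ≤ (‖z‖/(1+ε) * ‖(v:H)‖)^2 := by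
          exact pow_le_pow_left₀ (norm_nonneg _) hkv 2
      _ = ‖z‖^2/(1+ε)^2 * ‖(v:H)‖^2 := by rw [mul_pow, div_pow]
  have ha_lb : -(‖z‖^2/(1+ε)^2 * n) ≤ a := by
    have := hpos v
    rw [hh0] at this
    nlinarith [hkv2]
  -- main inequality: c‖z‖²n·|Im z| ≤ ‖z‖‖v‖‖u‖
  have key1 : c * (‖z‖^2 * n) * |z.im| ≤ ‖z‖ * (‖(v:H)‖ * ‖u‖) := by
    have hcn : c * (‖z‖^2 * n) ≤ a + ‖z‖^2 * n := by
      have hn0 : 0 ≤ n := by rw [hn_def]; positivity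
      rw [hc_def]
      have : (1 - 1/(1+ε)^2) * (‖z‖^2*n) = ‖z‖^2*n - ‖z‖^2/(1+ε)^2*n := by
        field_simp
      rw [this]; linarith [ha_lb]
    have h4 : (a + ‖z‖^2 * n) * |z.im| ≤ ‖z‖ * (‖(v:H)‖ * ‖u‖) :=
      (le_div_iff₀ hr).mp Hbound
    calc c * (‖z‖^2 * n) * |z.im| ≤ (a + ‖z‖^2 * n) * |z.im| := by
          exact mul_le_mul_of_nonneg_right hcn hr.le
      _ ≤ ‖z‖ * (‖(v:H)‖ * ‖u‖) := h4
  -- estimate (i)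
  have hi : ‖(v:H)‖ ≤ C * ‖u‖ / (‖z‖ * |z.im|) := by
    rcases eq_or_lt_of_le (norm_nonneg ((v:H))) with h0|hm
    · rw [← h0]; positivity
    · rw [le_div_iff₀ (by positivity), hC_def, one_div_mul_eq_div, ← sub_nonneg]
      have key1' : c * (‖z‖^2 * ‖(v:H)‖^2) * |z.im| ≤ ‖z‖ * (‖(v:H)‖ * ‖u‖) := by
        rw [← hn_def]; exact key1
      have hkey : c * (‖(v:H)‖ * (‖z‖ * |z.im|)) ≤ ‖u‖ := pencil_arith1 hs hm key1'
      have : ‖u‖ / c - ‖(v:H)‖ * (‖z‖ * |z.im|) =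
          (‖u‖ - c * (‖(v:H)‖ * (‖z‖ * |z.im|))) / c := by field_simp
      rw [this]
      apply div_nonneg _ hc.le
      linarith
  refine ⟨hi, ?_⟩
  -- estimate (ii)
  have hstep1 : h0Form h k v ≤ ‖z‖ * (‖(v:H)‖ * ‖u‖) / |z.im| := by
    rw [hh0]
    have : ‖k (v:H)‖^2 ≤ ‖z‖^2 * n := by
      have h5 : ‖z‖^2/(1+ε)^2 * n ≤ ‖z‖^2 * n := by
        have hn0 : 0 ≤ n := by rw [hn_def]; positivity
        have h6 : ‖z‖^2/(1+ε)^2 ≤ ‖z‖^2 :=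
          div_le_self (sq_nonneg _) (one_le_pow₀ (by linarith))
        exact mul_le_mul_of_nonneg_right h6 hn0
      linarith [hkv2]
    linarith [Hbound]
  have hstep2 : ‖z‖ * (‖(v:H)‖ * ‖u‖) / |z.im| ≤ ‖z‖ * ((C * ‖u‖ / (‖z‖ * |z.im|)) * ‖u‖) / |z.im| := by
    gcongr
  have hstep3 : ‖z‖ * ((C * ‖u‖ / (‖z‖ * |z.im|)) * ‖u‖) / |z.im| = C * ‖u‖^2 / |z.im|^2 :=
    pencil_arith2 hs.ne' hr.ne'
  have hstep4 : C * ‖u‖^2 / |z.im|^2 ≤ C^2 * ‖u‖^2 / |z.im|^2 := by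
    gcongr
    calc C = C * 1 := (mul_one C).symm
      _ ≤ C * C := by gcongr
      _ = C^2 := (sq C).symm
  have : |z.im|^2 = z.im^2 := sq_abs _
  calc h0Form h k v ≤ ‖z‖ * (‖(v:H)‖ * ‖u‖) / |z.im| := hstep1
    _ ≤ ‖z‖ * ((C * ‖u‖ / (‖z‖ * |z.im|)) * ‖u‖) / |z.im| := hstep2
    _ = C * ‖u‖^2 / |z.im|^2 := hstep3
    _ ≤ C^2 * ‖u‖^2 / |z.im|^2 := hstep4
    _ = C^2 * ‖u‖^2 / z.im^2 := by rw [this]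
end
end

section
/- Assume (h0 u | u) ≥ 0 for all u ∈ D(h), and let ℓ ∈ ℝ. Then the following are equivalent: (i) there exists C > 0 such that for all u0 ∈ D(h) and u1 ∈ H, | ‖u1 − ℓ u0‖² + (h0 u0 | u0) − ‖(k − ℓ) u0‖² | ≤ C ( ‖u1 − k u0‖² + (h0 u0 | u0) ); (ii) there exists C' > 0 such that ‖(k − ℓ) u0‖² ≤ C' (h0 u0 | u0) for all u0 ∈ D(h). That is, the conserved form ⟨·|·⟩_ℓ is continuous with respect to the homogeneous energy norm if and only if h0 ≳ (k − ℓ)². -/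
open Complex

noncomputable section

variable {H : Type*} [NormedAddCommGroup H] [InnerProductSpace ℂ H] [CompleteSpace H]

/-- The conserved form `⟨·|·⟩_ℓ` is continuous for the homogeneous energy
norm iff `h₀ ≳ (k-ℓ)²`. -/
theorem energy_form_continuous_homogeneous_iff
    (h : H →ₗ.[ℂ] H) (hsa : IsSelfAdjoint h)
    (k : H →L[ℂ] H) (hk : IsSelfAdjoint k)
    (hpos : ∀ u : h.domain, 0 ≤ h0Form h k u)
    (ℓ : ℝ) :
    (∃ C : ℝ, 0 < C ∧ ∀ (u0 : h.domain) (u1 : H),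
        |‖u1 - (ℓ : ℂ) • (u0 : H)‖ ^ 2 + h0Form h k u0
            - ‖k (u0 : H) - (ℓ : ℂ) • (u0 : H)‖ ^ 2|
          ≤ C * (‖u1 - k (u0 : H)‖ ^ 2 + h0Form h k u0)) ↔
    (∃ C' : ℝ, 0 < C' ∧ ∀ u0 : h.domain,
        ‖k (u0 : H) - (ℓ : ℂ) • (u0 : H)‖ ^ 2 ≤ C' * h0Form h k u0) := by
  constructor
  · rintro ⟨C, hC, hbound⟩
    refine ⟨C ^ 2 + 1, by positivity, ?_⟩
    intro u0
    set v : H := k (u0 : H) - (ℓ : ℂ) • (u0 : H) with hv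
    set Q : ℝ := h0Form h k u0 with hQdef
    have hQ0 : 0 ≤ Q := hpos u0
    set t : ℝ := 1 / C with ht
    have ht0 : 0 < t := by positivity
    have htC : t * C = 1 := by rw [ht]; field_simp
    have key := hbound u0 (k (u0 : H) + (t : ℂ) • v)
    have e1 : k (u0 : H) + (t : ℂ) • v - (ℓ : ℂ) • (u0 : H) = ((1 + t : ℝ) : ℂ) • v := by
      rw [hv, Complex.ofReal_add, Complex.ofReal_one]; module
    have e2 : k (u0 : H) + (t : ℂ) • v - k (u0 : H) = (t : ℂ) • v := by abel
    rw [e1, e2] at key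
    have n1 : ‖((1 + t : ℝ) : ℂ) • v‖ ^ 2 = (1 + t) ^ 2 * ‖v‖ ^ 2 := by
      rw [norm_smul, Complex.norm_real, Real.norm_eq_abs, mul_pow, _root_.sq_abs]
    have n2 : ‖(t : ℂ) • v‖ ^ 2 = t ^ 2 * ‖v‖ ^ 2 := by
      rw [norm_smul, Complex.norm_real, Real.norm_eq_abs, mul_pow, _root_.sq_abs]
    rw [n1, n2] at key
    set V : ℝ := ‖v‖ ^ 2 with hV
    have hV0 : 0 ≤ V := sq_nonneg _
    have habs : (1 + t) ^ 2 * V + Q - V ≤ C * (t ^ 2 * V + Q) := by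
      refine le_trans (le_abs_self _) key
    have h3 : C ^ 2 * t ^ 2 = 1 := by
      rw [show C ^ 2 * t ^ 2 = (t * C) ^ 2 by ring, htC, one_pow]
    have h4 : C ^ 2 * t = C := by
      rw [show C ^ 2 * t = (t * C) * C by ring, htC, one_mul]
    have key2 : (C + 1) * V ≤ (C ^ 3 - C ^ 2) * Q := by
      have hm := mul_le_mul_of_nonneg_left habs (le_of_lt (by positivity : (0:ℝ) < C ^ 2))
      nlinarith [mul_le_mul_of_nonneg_right h4.le hV0, mul_le_mul_of_nonneg_right h4.ge hV0,
        mul_le_mul_of_nonneg_right h3.le hV0, mul_le_mul_of_nonneg_right h3.ge hV0]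
    nlinarith [mul_nonneg (mul_nonneg (sq_nonneg C) hQ0) hC.le, mul_nonneg hQ0 hC.le]
  · rintro ⟨C', hC', hb⟩
    refine ⟨C' + 2, by linarith, ?_⟩
    intro u0 u1
    set v : H := k (u0 : H) - (ℓ : ℂ) • (u0 : H) with hv
    set w : H := u1 - k (u0 : H) with hw
    set Q : ℝ := h0Form h k u0 with hQdef
    have hQ0 : 0 ≤ Q := hpos u0
    have e1 : u1 - (ℓ : ℂ) • (u0 : H) = w + v := by rw [hw, hv]; abel
    rw [e1, norm_add_sq (𝕜 := ℂ)]
    have hv2 : ‖v‖ ^ 2 ≤ C' * Q := hb u0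
    have hcs : |RCLike.re (inner ℂ w v : ℂ)| ≤ ‖w‖ * ‖v‖ := by
      refine le_trans (RCLike.abs_re_le_norm _) ?_
      exact norm_inner_le_norm w v
    rw [abs_le]
    constructor
    · nlinarith [sq_nonneg (‖w‖ - ‖v‖), abs_le.mp hcs, sq_nonneg (‖w‖ + ‖v‖)]
    · nlinarith [sq_nonneg (‖w‖ - ‖v‖), abs_le.mp hcs, sq_nonneg (‖w‖ + ‖v‖)]
end
end

section
/- Let u : ℝ → H be twice continuously differentiable with u(t) ∈ D(h) for all t, solving the abstract Klein–Gordon equation u''(t) = 2 i k u'(t) − h u(t). Then for every ℓ ∈ ℝ, the energy E_ℓ(t) := ‖u'(t) − i ℓ u(t)‖² + (h u(t) | u(t)) + 2ℓ (k u(t) | u(t)) − ℓ² ‖u(t)‖² is constant in t. (This is the conservation of the energy ⟨u,u⟩_ℓ associated with the pencil p(ℓ) = h + ℓ(2k − ℓ).) -/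
open Complex Filter

noncomputable section

variable {H : Type*} [NormedAddCommGroup H] [InnerProductSpace ℂ H] [CompleteSpace H]

private lemma re_inner_smul_right' (x y : H) (r : ℝ) :
    (inner ℂ x (r • y) : ℂ).re = r * (inner ℂ x y : ℂ).re := by
  rw [RCLike.real_smul_eq_coe_smul (K := ℂ), inner_smul_right]
  simp

private lemma re_inner_smul_left' (x y : H) (r : ℝ) :
    (inner ℂ (r • x) y : ℂ).re = r * (inner ℂ x y : ℂ).re := by
  rw [RCLike.real_smul_eq_coe_smul (K := ℂ), inner_smul_left]
  simp

/-- For a solution of `u'' = 2ik u' - h u`, the energy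
`E_ℓ(t) = ‖u'-iℓu‖² + (hu|u) + 2ℓ(ku|u) - ℓ²‖u‖²` is conserved. -/
theorem energy_ell_conserved
    (h : H →ₗ.[ℂ] H) (hsa : IsSelfAdjoint h)
    (k : H →L[ℂ] H) (hk : IsSelfAdjoint k)
    (u : ℝ → H) (hreg : ContDiff ℝ 2 u)
    (hdom : ∀ t : ℝ, u t ∈ h.domain)
    (hode : ∀ t : ℝ,
      deriv (deriv u) t = (2 * Complex.I) • k (deriv u t) - h ⟨u t, hdom t⟩)
    (ℓ : ℝ) :
    ∀ s t : ℝ,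
      ‖deriv u s - (Complex.I * (ℓ : ℂ)) • u s‖ ^ 2
          + (inner ℂ (h ⟨u s, hdom s⟩) (u s) : ℂ).re
          + 2 * ℓ * (inner ℂ (k (u s)) (u s) : ℂ).re - ℓ ^ 2 * ‖u s‖ ^ 2
        = ‖deriv u t - (Complex.I * (ℓ : ℂ)) • u t‖ ^ 2
          + (inner ℂ (h ⟨u t, hdom t⟩) (u t) : ℂ).re
          + 2 * ℓ * (inner ℂ (k (u t)) (u t) : ℂ).re - ℓ ^ 2 * ‖u t‖ ^ 2 := by
  -- notation
  set v : ℝ → H := deriv u with hv_def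
  -- regularity facts
  have hreg2 : ContDiff ℝ (1 + 1 : WithTop ℕ∞) u := by
    rw [one_add_one_eq_two]; exact_mod_cast hreg
  have h1 : ContDiff ℝ 1 v := (contDiff_succ_iff_deriv.mp hreg2).2.2
  have hud : Differentiable ℝ u := (contDiff_succ_iff_deriv.mp hreg2).1
  have hvd : Differentiable ℝ v := (contDiff_one_iff_deriv.mp h1).1
  have hv'c : Continuous (deriv v) := (contDiff_one_iff_deriv.mp h1).2
  have hvc : Continuous v := hvd.continuous
  have hu : ∀ x : ℝ, HasDerivAt u (v x) x := fun x => (hud x).hasDerivAt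
  have hv : ∀ x : ℝ, HasDerivAt v (deriv v x) x := fun x => (hvd x).hasDerivAt
  -- the function w(t) = h(u t), expressed via the ODE
  set w : ℝ → H := fun x => (2 * Complex.I) • k (v x) - deriv v x with hw_def
  have hw : ∀ x : ℝ, (h ⟨u x, hdom x⟩ : H) = w x := by
    intro x
    have := hode x
    simp only [hw_def]
    rw [this]
    abel
  have hwc : Continuous w := ((continuous_const_smul _).comp (k.continuous.comp hvc)).sub hv'c
  -- symmetry of h
  have hsym : ∀ x y : h.domain, (inner ℂ (h x) (y : H) : ℂ) = inner ℂ (x : H) (h y) := by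
    have hd := hsa.dense_domain
    have hfa := LinearPMap.adjoint_isFormalAdjoint hd
    rw [LinearPMap.isSelfAdjoint_def] at hsa
    rw [hsa] at hfa
    exact hfa
  -- symmetry of k
  have hksym : ∀ x y : H, (inner ℂ (k x) y : ℂ) = inner ℂ x (k y) := fun x y =>
    hk.isSymmetric x y
  have hwu : ∀ x y : ℝ, (inner ℂ (w x) (u y) : ℂ) = inner ℂ (u x) (w y) := by
    intro x y
    rw [← hw x, ← hw y]
    exact hsym ⟨u x, hdom x⟩ ⟨u y, hdom y⟩
  -- realness facts
  have hwu_re : ∀ x : ℝ, (inner ℂ (w x) (u x) : ℂ).im = 0 := by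
    intro x
    have h1 : (inner ℂ (w x) (u x) : ℂ) = (starRingEnd ℂ) (inner ℂ (w x) (u x) : ℂ) := by
      rw [inner_conj_symm]; exact hwu x x
    exact Complex.conj_eq_iff_im.mp h1.symm
  have hkvv_re : ∀ x : H, (inner ℂ (k x) x : ℂ).im = 0 := by
    intro x
    have h1 : (inner ℂ (k x) x : ℂ) = (starRingEnd ℂ) (inner ℂ (k x) x : ℂ) := by
      rw [inner_conj_symm]; exact hksym x x
    exact Complex.conj_eq_iff_im.mp h1.symm
  -- the energy function
  set E : ℝ → ℝ := fun x =>
    ‖v x - (Complex.I * (ℓ : ℂ)) • u x‖ ^ 2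
      + (inner ℂ (w x) (u x) : ℂ).re
      + 2 * ℓ * (inner ℂ (k (u x)) (u x) : ℂ).re - ℓ ^ 2 * ‖u x‖ ^ 2 with hE_def
  -- derivative of the h-term, via the slope trick
  have key : ∀ x : ℝ, HasDerivAt (fun y => (inner ℂ (w y) (u y) : ℂ).re)
      (2 * (inner ℂ (w x) (v x) : ℂ).re) x := by
    intro x
    rw [hasDerivAt_iff_tendsto_slope]
    have hlim1 : Tendsto w (nhdsWithin x {x}ᶜ) (nhds (w x)) :=
      (hwc.tendsto x).mono_left nhdsWithin_le_nhds
    have hlim2 : Tendsto (slope u x) (nhdsWithin x {x}ᶜ) (nhds (v x)) :=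
      hasDerivAt_iff_tendsto_slope.mp (hu x)
    have c1 : Tendsto (fun y => (inner ℂ (w y) (slope u x y) : ℂ))
        (nhdsWithin x {x}ᶜ) (nhds (inner ℂ (w x) (v x) : ℂ)) := hlim1.inner hlim2
    have c2 : Tendsto (fun y => (inner ℂ (slope u x y) (w x) : ℂ))
        (nhdsWithin x {x}ᶜ) (nhds (inner ℂ (v x) (w x) : ℂ)) :=
      hlim2.inner tendsto_const_nhds
    have hc : Tendsto (fun y => (inner ℂ (w y) (slope u x y) : ℂ).re
          + (inner ℂ (slope u x y) (w x) : ℂ).re)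
        (nhdsWithin x {x}ᶜ)
        (nhds ((inner ℂ (w x) (v x) : ℂ).re + (inner ℂ (v x) (w x) : ℂ).re)) :=
      ((Complex.continuous_re.tendsto _).comp c1).add
        ((Complex.continuous_re.tendsto _).comp c2)
    have hval : (inner ℂ (w x) (v x) : ℂ).re + (inner ℂ (v x) (w x) : ℂ).re
        = 2 * (inner ℂ (w x) (v x) : ℂ).re := by
      have h2 : (inner ℂ (v x) (w x) : ℂ) = (starRingEnd ℂ) (inner ℂ (w x) (v x) : ℂ) :=
        (inner_conj_symm _ _).symm
      rw [h2, Complex.conj_re]; ring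
    rw [← hval]
    refine hc.congr' ?_
    filter_upwards [self_mem_nhdsWithin] with y hy
    have hyx : y - x ≠ 0 := sub_ne_zero.mpr hy
    have split : (inner ℂ (w y) (u y) : ℂ) - inner ℂ (w x) (u x)
        = inner ℂ (w y) (u y - u x) + inner ℂ (u y - u x) (w x) := by
      have e1 : (inner ℂ (w y) (u y - u x) : ℂ)
          = inner ℂ (w y) (u y) - inner ℂ (w y) (u x) := inner_sub_right _ _ _
      have e2 : (inner ℂ (u y - u x) (w x) : ℂ)
          = inner ℂ (u y) (w x) - inner ℂ (u x) (w x) := inner_sub_left _ _ _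
      rw [e1, e2, hwu y x, ← hwu x x]
      ring
    have hre : (inner ℂ (w y) (u y) : ℂ).re - (inner ℂ (w x) (u x) : ℂ).re
        = (inner ℂ (w y) (u y - u x) : ℂ).re + (inner ℂ (u y - u x) (w x) : ℂ).re := by
      have := congrArg Complex.re split
      simpa using this
    show (inner ℂ (w y) (slope u x y) : ℂ).re + (inner ℂ (slope u x y) (w x) : ℂ).re
        = slope (fun y => (inner ℂ (w y) (u y) : ℂ).re) x y
    rw [slope_def_field, slope_def_module]
    rw [re_inner_smul_right', re_inner_smul_left']
    rw [div_eq_inv_mul]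
    rw [show ((inner ℂ (w y) (u y) : ℂ).re - (inner ℂ (w x) (u x) : ℂ).re)
        = (inner ℂ (w y) (u y - u x) : ℂ).re + (inner ℂ (u y - u x) (w x) : ℂ).re from hre]
    ring
  -- derivative of E is 0
  have hE : ∀ x : ℝ, HasDerivAt E 0 x := by
    intro x
    have ha : HasDerivAt (fun y => v y - (Complex.I * (ℓ : ℂ)) • u y)
        (deriv v x - (Complex.I * (ℓ : ℂ)) • v x) x := (hv x).sub ((hu x).const_smul _)
    have hsq : HasDerivAt (fun y => ‖v y - (Complex.I * (ℓ : ℂ)) • u y‖ ^ 2)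
        ((inner ℂ (v x - (Complex.I * (ℓ : ℂ)) • u x)
            (deriv v x - (Complex.I * (ℓ : ℂ)) • v x) : ℂ).re
          + (inner ℂ (deriv v x - (Complex.I * (ℓ : ℂ)) • v x)
            (v x - (Complex.I * (ℓ : ℂ)) • u x) : ℂ).re) x := by
      have := (ha.inner ℂ ha)
      have h2 := Complex.reCLM.hasFDerivAt.comp_hasDerivAt x this
      simp only [Complex.reCLM_apply, Complex.add_re] at h2 ⊢
      convert h2 using 1
      rfl
      rfl
      funext y
      rw [← inner_self_eq_norm_sq (𝕜 := ℂ)]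
      rfl
    have hku : HasDerivAt (fun y => k (u y)) (k (v x)) x :=
      (k.restrictScalars ℝ).hasFDerivAt.comp_hasDerivAt x (hu x)
    have hkterm : HasDerivAt (fun y => 2 * ℓ * (inner ℂ (k (u y)) (u y) : ℂ).re)
        (2 * ℓ * ((inner ℂ (k (u x)) (v x) : ℂ).re + (inner ℂ (k (v x)) (u x) : ℂ).re)) x := by
      have := (hku.inner ℂ (hu x))
      have h2 := Complex.reCLM.hasFDerivAt.comp_hasDerivAt x this
      simpa only [Function.comp_apply, Complex.reCLM_apply, Complex.add_re] using h2.const_mul (2 * ℓ)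
    have hnterm : HasDerivAt (fun y => ℓ ^ 2 * ‖u y‖ ^ 2)
        (ℓ ^ 2 * ((inner ℂ (u x) (v x) : ℂ).re + (inner ℂ (v x) (u x) : ℂ).re)) x := by
      have := ((hu x).inner ℂ (hu x))
      have h2 := Complex.reCLM.hasFDerivAt.comp_hasDerivAt x this
      have h3 : HasDerivAt (fun y => ‖u y‖ ^ 2)
          ((inner ℂ (u x) (v x) : ℂ).re + (inner ℂ (v x) (u x) : ℂ).re) x := by
        simp only [Complex.reCLM_apply, Complex.add_re] at h2 ⊢
        convert h2 using 1
        rfl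
        rfl
        funext y
        rw [← inner_self_eq_norm_sq (𝕜 := ℂ)]
        rfl
      exact h3.const_mul (ℓ ^ 2)
    have htotal := ((hsq.add (key x)).add hkterm).sub hnterm
    have hzero : ((inner ℂ (v x - (Complex.I * (ℓ : ℂ)) • u x)
            (deriv v x - (Complex.I * (ℓ : ℂ)) • v x) : ℂ).re
          + (inner ℂ (deriv v x - (Complex.I * (ℓ : ℂ)) • v x)
            (v x - (Complex.I * (ℓ : ℂ)) • u x) : ℂ).re
          + 2 * (inner ℂ (w x) (v x) : ℂ).re
          + 2 * ℓ * ((inner ℂ (k (u x)) (v x) : ℂ).re + (inner ℂ (k (v x)) (u x) : ℂ).re)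
          - ℓ ^ 2 * ((inner ℂ (u x) (v x) : ℂ).re + (inner ℂ (v x) (u x) : ℂ).re)) = 0 := by
      have hdv : deriv v x = (2 * Complex.I) • k (v x) - w x := by
        rw [hode x, hw x]
      rw [hdv]
      -- turn every inner product into the orientation ⟪·, v/u⟫ via conjugation
      rw [show (inner ℂ (v x - (Complex.I * (ℓ : ℂ)) • u x)
            ((2 * Complex.I) • k (v x) - w x - (Complex.I * (ℓ : ℂ)) • v x) : ℂ)
          = (starRingEnd ℂ) (inner ℂ
            ((2 * Complex.I) • k (v x) - w x - (Complex.I * (ℓ : ℂ)) • v x)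
            (v x - (Complex.I * (ℓ : ℂ)) • u x) : ℂ) from (inner_conj_symm _ _).symm]
      rw [show (inner ℂ (k (u x)) (v x) : ℂ) = (starRingEnd ℂ) (inner ℂ (k (v x)) (u x) : ℂ) by
        rw [hksym (u x) (v x), inner_conj_symm]]
      rw [show (inner ℂ (u x) (v x) : ℂ) = (starRingEnd ℂ) (inner ℂ (v x) (u x) : ℂ) by
        rw [inner_conj_symm]]
      simp only [inner_sub_left, inner_sub_right, inner_smul_left, inner_smul_right,
        map_mul, map_sub, Complex.conj_I, Complex.conj_ofReal, map_ofNat,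
        Complex.sub_re, Complex.add_re, Complex.mul_re, Complex.mul_im,
        Complex.I_re, Complex.I_im, Complex.ofReal_re, Complex.ofReal_im,
        Complex.conj_re, Complex.conj_im, Complex.re_ofNat, Complex.im_ofNat,
        Complex.neg_re, Complex.neg_im, Complex.sub_im, Complex.add_im]
      rw [hkvv_re (v x), hwu_re x,
        show (inner ℂ (v x) (v x) : ℂ).im = 0 from
          Complex.conj_eq_iff_im.mp (inner_conj_symm (v x) (v x))]
      ring
    have : HasDerivAt E 0 x := by
      rw [← hzero]
      exact htotal
    exact this
  have hdiff : Differentiable ℝ E := fun x => (hE x).differentiableAt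
  have hconst : ∀ s t : ℝ, E s = E t := fun s t =>
    is_const_of_deriv_eq_zero hdiff (fun x => (hE x).deriv) s t
  intro s t
  have := hconst s t
  rw [hE_def] at this
  simpa only [hw s, hw t] using this
end
end

section
/- Let u : ℝ → H be twice continuously differentiable with u(t) ∈ D(h) for all t, solving the abstract Klein–Gordon equation u''(t) = 2 i k u'(t) − h u(t). Then the charge Q(t) := (k u(t) | u(t)) − Im( ( u(t) | u'(t) ) ) is constant in t. -/
open Complex

noncomputable section

variable {H : Type*} [NormedAddCommGroup H] [InnerProductSpace ℂ H] [CompleteSpace H]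

/-- For a solution of `u'' = 2ik u' - h u`, the charge
`Q(t) = (ku|u) - Im (u|u')` is conserved. -/
theorem charge_conserved
    (h : H →ₗ.[ℂ] H) (hsa : IsSelfAdjoint h)
    (k : H →L[ℂ] H) (hk : IsSelfAdjoint k)
    (u : ℝ → H) (hreg : ContDiff ℝ 2 u)
    (hdom : ∀ t : ℝ, u t ∈ h.domain)
    (hode : ∀ t : ℝ,
      deriv (deriv u) t = (2 * Complex.I) • k (deriv u t) - h ⟨u t, hdom t⟩) :
    ∀ s t : ℝ,
      (inner ℂ (k (u s)) (u s) : ℂ).re - (inner ℂ (u s) (deriv u s) : ℂ).im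
        = (inner ℂ (k (u t)) (u t) : ℂ).re - (inner ℂ (u t) (deriv u t) : ℂ).im := by
  have hdense : Dense (h.domain : Set H) := hsa.dense_domain
  have hform : h.IsFormalAdjoint h := by
    have heq : h.adjoint = h := LinearPMap.isSelfAdjoint_def.mp hsa
    have := LinearPMap.adjoint_isFormalAdjoint hdense
    rwa [heq] at this
  have hksym : ∀ x y : H, (inner ℂ (k x) y : ℂ) = inner ℂ x (k y) := hk.isSymmetric
  have hd1 : Differentiable ℝ u := hreg.differentiable (by norm_num)
  have hd2 : Differentiable ℝ (deriv u) := by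
    have : ContDiff ℝ (1 + 1) u := by norm_num; exact hreg
    exact ((contDiff_succ_iff_deriv.mp this).2.2).differentiable (by norm_num)
  have key : ∀ t, HasDerivAt
      (fun s => (inner ℂ (k (u s)) (u s) : ℂ).re - (inner ℂ (u s) (deriv u s) : ℂ).im) 0 t := by
    intro t
    have hu : HasDerivAt u (deriv u t) t := (hd1 t).hasDerivAt
    have hu2 : HasDerivAt (deriv u) (deriv (deriv u) t) t := (hd2 t).hasDerivAt
    have hkd := HasFDerivAt.comp_hasDerivAt (f := u) (x := t) (k.restrictScalars ℝ).hasFDerivAt hu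
    have hA : HasDerivAt (fun s => (inner ℂ (k (u s)) (u s) : ℂ))
        (inner ℂ (k (u t)) (deriv u t) + inner ℂ (k (deriv u t)) (u t)) t :=
      HasDerivAt.inner ℂ hkd hu
    have hB : HasDerivAt (fun s => (inner ℂ (u s) (deriv u s) : ℂ))
        (inner ℂ (u t) (deriv (deriv u) t) + inner ℂ (deriv u t) (deriv u t)) t :=
      HasDerivAt.inner ℂ hu hu2
    have hre := HasFDerivAt.comp_hasDerivAt
      (f := fun s => (inner ℂ (k (u s)) (u s) : ℂ)) (x := t) Complex.reCLM.hasFDerivAt hA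
    have him := HasFDerivAt.comp_hasDerivAt
      (f := fun s => (inner ℂ (u s) (deriv u s) : ℂ)) (x := t) Complex.imCLM.hasFDerivAt hB
    have := hre.sub him
    convert this using 1
    case e'_4 => rfl
    case e'_5 => rfl
    case e'_8 => rfl
    rw [hode t]
    have h1 : (inner ℂ (k (u t)) (deriv u t) : ℂ) = inner ℂ (u t) (k (deriv u t)) :=
      hksym _ _
    have h2 : (inner ℂ (k (deriv u t)) (u t) : ℂ).re = (inner ℂ (u t) (k (deriv u t)) : ℂ).re := by
      rw [← inner_conj_symm (u t) (k (deriv u t))]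
      exact (Complex.conj_re _).symm
    have h3 : (inner ℂ (u t) (h ⟨u t, hdom t⟩) : ℂ).im = 0 := by
      have hs := hform ⟨u t, hdom t⟩ ⟨u t, hdom t⟩
      rw [← Complex.conj_eq_iff_im]
      conv_lhs => rw [← hs]
      exact inner_conj_symm _ _
    have h4 : (inner ℂ (deriv u t) (deriv u t) : ℂ).im = 0 := by
      rw [inner_self_eq_norm_sq_to_K]; norm_num [pow_two, Complex.mul_im]
    simp only [Complex.reCLM_apply, Complex.imCLM_apply, inner_sub_right, inner_smul_right,
      Complex.add_re, Complex.add_im, Complex.sub_im, h1, h2, h3, h4,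
      Complex.mul_im, Complex.mul_re, Complex.I_re, Complex.I_im,
      Complex.re_ofNat, Complex.im_ofNat]
    ring
  intro s t
  exact is_const_of_deriv_eq_zero
    (fun x => (key x).differentiableAt) (fun x => (key x).deriv) s t
end
end

section
/- Let u : ℝ → H be twice continuously differentiable with u(t) ∈ D(h) for all t, solving the abstract Klein–Gordon equation u''(t) = 2 i k u'(t) − h u(t). Then the homogeneous energy E(t) := ‖u'(t) − i k u(t)‖² + (h0 u(t) | u(t)) (where h0 = h + k²) is differentiable in t with derivative E'(t) = 2 Im( ( k u(t) | h u(t) ) ). In particular, if k commutes with h (in the sense that Im(k v | h v) = 0 for all v ∈ D(h)), the homogeneous energy is conserved. -/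
open Complex

noncomputable section

variable {H : Type*} [NormedAddCommGroup H] [InnerProductSpace ℂ H] [CompleteSpace H]

local notation "⟪" x ", " y "⟫" => (inner ℂ x y : ℂ)

/-- For a solution of `u'' = 2ik u' - h u`, the homogeneous energy
`E(t) = ‖u'-iku‖² + (h₀u|u)` has derivative `E'(t) = 2 Im (ku|hu)`; in particular it is
conserved if `Im (kv|hv) = 0` for all `v ∈ D(h)`. -/
theorem homogeneous_energy_derivative
    (h : H →ₗ.[ℂ] H) (hsa : IsSelfAdjoint h)
    (k : H →L[ℂ] H) (hk : IsSelfAdjoint k)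
    (u : ℝ → H) (hreg : ContDiff ℝ 2 u)
    (hdom : ∀ t : ℝ, u t ∈ h.domain)
    (hode : ∀ t : ℝ,
      deriv (deriv u) t = (2 * Complex.I) • k (deriv u t) - h ⟨u t, hdom t⟩) :
    (∀ t : ℝ,
      HasDerivAt
        (fun s : ℝ => ‖deriv u s - Complex.I • k (u s)‖ ^ 2
          + (inner ℂ (h ⟨u s, hdom s⟩ + k (k (u s))) (u s) : ℂ).re)
        (2 * (inner ℂ (k (u t)) (h ⟨u t, hdom t⟩) : ℂ).im) t) ∧
    ((∀ v : h.domain, (inner ℂ (k (v : H)) (h v) : ℂ).im = 0) →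
      ∀ s t : ℝ,
        ‖deriv u s - Complex.I • k (u s)‖ ^ 2
            + (inner ℂ (h ⟨u s, hdom s⟩ + k (k (u s))) (u s) : ℂ).re
          = ‖deriv u t - Complex.I • k (u t)‖ ^ 2
            + (inner ℂ (h ⟨u t, hdom t⟩ + k (k (u t))) (u t) : ℂ).re) := by
  -- symmetry of h
  have hsym : h.IsFormalAdjoint h := by
    have h1 := LinearPMap.adjoint_isFormalAdjoint (T := h) hsa.dense_domain
    rwa [LinearPMap.isSelfAdjoint_def.mp hsa] at h1
  have hksym : ∀ x y : H, ⟪k x, y⟫ = ⟪x, k y⟫ := hk.isSymmetric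
  -- regularity
  have hu_d : Differentiable ℝ u := hreg.differentiable (by norm_num)
  have hderiv1 : ContDiff ℝ 1 (deriv u) := by
    have h2 : ContDiff ℝ (1 + 1 : ℕ) u := by exact_mod_cast hreg
    exact (contDiff_succ_iff_deriv.mp h2).2.2
  have hu'_d : Differentiable ℝ (deriv u) := hderiv1.differentiable one_ne_zero
  have hu''_c : Continuous (deriv (deriv u)) := hderiv1.continuous_deriv le_rfl
  have hw : ∀ s, (h ⟨u s, hdom s⟩ : H)
      = (2 * Complex.I) • k (deriv u s) - deriv (deriv u) s := by
    intro s; rw [hode s]; abel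
  have hWc : Continuous fun s => (2 * Complex.I) • k (deriv u s) - deriv (deriv u) s :=
    (((k.continuous.comp hu'_d.continuous).const_smul (2 * Complex.I))).sub hu''_c
  -- derivative of the pure h-term via slope trick
  have hf : ∀ t, HasDerivAt (fun s => ⟪(h ⟨u s, hdom s⟩ : H), u s⟫.re)
      (⟪(h ⟨u t, hdom t⟩ : H), deriv u t⟫.re + ⟪deriv u t, (h ⟨u t, hdom t⟩ : H)⟫.re) t := by
    intro t
    rw [hasDerivAt_iff_tendsto_slope]
    have hslope : Filter.Tendsto (slope u t) (nhdsWithin t {t}ᶜ) (nhds (deriv u t)) :=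
      hasDerivAt_iff_tendsto_slope.mp (hu_d t).hasDerivAt
    have hWt : Filter.Tendsto (fun s => (h ⟨u s, hdom s⟩ : H)) (nhdsWithin t {t}ᶜ)
        (nhds (h ⟨u t, hdom t⟩ : H)) := by
      have h3 := (hWc.tendsto t).mono_left (nhdsWithin_le_nhds (s := {t}ᶜ))
      have h4 : (fun s => (h ⟨u s, hdom s⟩ : H))
          = fun s => (2 * Complex.I) • k (deriv u s) - deriv (deriv u) s := funext hw
      rw [h4, hw t]; exact h3
    have htend : Filter.Tendsto
        (fun s => ⟪(h ⟨u s, hdom s⟩ : H), slope u t s⟫.re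
          + ⟪slope u t s, (h ⟨u t, hdom t⟩ : H)⟫.re) (nhdsWithin t {t}ᶜ)
        (nhds (⟪(h ⟨u t, hdom t⟩ : H), deriv u t⟫.re
          + ⟪deriv u t, (h ⟨u t, hdom t⟩ : H)⟫.re)) :=
      ((Complex.continuous_re.tendsto _).comp (hWt.inner hslope)).add
        ((Complex.continuous_re.tendsto _).comp (hslope.inner tendsto_const_nhds))
    refine htend.congr' ?_
    filter_upwards [self_mem_nhdsWithin] with s hs
    have hs' : s - t ≠ 0 := sub_ne_zero.mpr hs
    have key : ⟪(h ⟨u s, hdom s⟩ : H), u s - u t⟫ + ⟪u s - u t, (h ⟨u t, hdom t⟩ : H)⟫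
        = ⟪(h ⟨u s, hdom s⟩ : H), u s⟫ - ⟪(h ⟨u t, hdom t⟩ : H), u t⟫ := by
      have e1 : ⟪(h ⟨u s, hdom s⟩ : H), u t⟫ = ⟪u s, (h ⟨u t, hdom t⟩ : H)⟫ :=
        hsym ⟨u s, hdom s⟩ ⟨u t, hdom t⟩
      have e2 : ⟪(h ⟨u t, hdom t⟩ : H), u t⟫ = ⟪u t, (h ⟨u t, hdom t⟩ : H)⟫ :=
        hsym ⟨u t, hdom t⟩ ⟨u t, hdom t⟩
      rw [inner_sub_right, inner_sub_left]
      linear_combination e2 - e1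
    have hslope_eq : slope u t s = ((((s - t)⁻¹ : ℝ)) : ℂ) • (u s - u t) := by
      rw [slope_def_module, RCLike.real_smul_eq_coe_smul (K := ℂ)]; norm_cast
    have e3 : ⟪(h ⟨u s, hdom s⟩ : H), slope u t s⟫ + ⟪slope u t s, (h ⟨u t, hdom t⟩ : H)⟫
        = ((((s - t)⁻¹ : ℝ)) : ℂ) * (⟪(h ⟨u s, hdom s⟩ : H), u s⟫
          - ⟪(h ⟨u t, hdom t⟩ : H), u t⟫) := by
      rw [hslope_eq, inner_smul_left, inner_smul_right, Complex.conj_ofReal, ← key]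
      ring
    rw [slope_def_field, ← Complex.add_re, e3, Complex.re_ofReal_mul, Complex.sub_re,
      div_eq_inv_mul]
  -- derivative of v := u' - I k u
  have hku : ∀ t, HasDerivAt (fun s => k (u s)) (k (deriv u t)) t := fun t =>
    (HasFDerivAt.comp_hasDerivAt (l := ⇑k) (l' := k.restrictScalars ℝ) t (k.restrictScalars ℝ).hasFDerivAt (hu_d t).hasDerivAt :
      HasDerivAt (⇑k ∘ u) (k (deriv u t)) t)
  have hvd : ∀ t, HasDerivAt (fun s => deriv u s - Complex.I • k (u s))
      (deriv (deriv u) t - Complex.I • k (deriv u t)) t := fun t =>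
    ((hu'_d t).hasDerivAt).sub ((hku t).const_smul Complex.I)
  have hA : ∀ t, HasDerivAt (fun s => ‖deriv u s - Complex.I • k (u s)‖ ^ 2)
      (⟪deriv u t - Complex.I • k (u t), deriv (deriv u) t - Complex.I • k (deriv u t)⟫
        + ⟪deriv (deriv u) t - Complex.I • k (deriv u t),
            deriv u t - Complex.I • k (u t)⟫).re t := by
    intro t
    have h5 := HasDerivAt.inner ℂ (hvd t) (hvd t)
    have hns : ∀ x : H, (inner ℂ x x : ℂ).re = ‖x‖ ^ 2 := fun x => by
      rw [← inner_self_eq_norm_sq (𝕜 := ℂ)]; rfl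
    simpa only [Function.comp_def, Complex.reCLM_apply, hns] using
      Complex.reCLM.hasFDerivAt.comp_hasDerivAt t h5
  have hB : ∀ t, HasDerivAt (fun s => ⟪k (k (u s)), u s⟫.re)
      (⟪k (k (u t)), deriv u t⟫ + ⟪k (k (deriv u t)), u t⟫).re t := by
    intro t
    have hkk : HasDerivAt (fun s => k (k (u s))) (k (k (deriv u t))) t :=
      (HasFDerivAt.comp_hasDerivAt (l := ⇑k) (l' := k.restrictScalars ℝ) t (k.restrictScalars ℝ).hasFDerivAt (hku t) :
        HasDerivAt (⇑k ∘ fun s => k (u s)) (k (k (deriv u t))) t)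
    have h5 := HasDerivAt.inner ℂ hkk (hu_d t).hasDerivAt
    simpa only [Function.comp_def, Complex.reCLM_apply] using
      Complex.reCLM.hasFDerivAt.comp_hasDerivAt t h5
  have key : ∀ t, HasDerivAt
      (fun s : ℝ => ‖deriv u s - Complex.I • k (u s)‖ ^ 2
        + ⟪(h ⟨u s, hdom s⟩ : H) + k (k (u s)), u s⟫.re)
      (2 * ⟪k (u t), (h ⟨u t, hdom t⟩ : H)⟫.im) t := by
    intro t
    have hsum := (hA t).add ((hf t).add (hB t))
    have hfun : (fun s => ‖deriv u s - Complex.I • k (u s)‖ ^ 2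
        + (⟪(h ⟨u s, hdom s⟩ : H), u s⟫.re + ⟪k (k (u s)), u s⟫.re))
        = fun s : ℝ => ‖deriv u s - Complex.I • k (u s)‖ ^ 2
          + ⟪(h ⟨u s, hdom s⟩ : H) + k (k (u s)), u s⟫.re := by
      funext s; rw [inner_add_left, Complex.add_re]
    simp only [Pi.add_def] at hsum; rw [hfun] at hsum
    refine hsum.congr_deriv ?_
    rw [hode t]
    set p := deriv u t with hp
    set q := u t with hq
    set W := (h ⟨u t, hdom t⟩ : H) with hW
    rw [← hq]
    have c1 : ⟪p, k p⟫ = (starRingEnd ℂ) ⟪k p, p⟫ := (inner_conj_symm p (k p)).symm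
    have c2 : ⟪p, W⟫ = (starRingEnd ℂ) ⟪W, p⟫ := (inner_conj_symm p W).symm
    have c3 : ⟪k q, k p⟫ = (starRingEnd ℂ) ⟪k p, k q⟫ := (inner_conj_symm (k q) (k p)).symm
    have c4 : ⟪k q, W⟫ = (starRingEnd ℂ) ⟪W, k q⟫ := (inner_conj_symm (k q) W).symm
    have c5 : ⟪k (k q), p⟫ = (starRingEnd ℂ) ⟪k p, k q⟫ := by rw [hksym (k q) p, c3]
    have c6 : ⟪k (k p), q⟫ = ⟪k p, k q⟫ := hksym (k p) q
    have cP : (⟪k p, p⟫).im = 0 := by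
      have := (hksym p p).symm
      rw [c1] at this
      exact Complex.conj_eq_iff_im.mp this
    simp only [inner_sub_left, inner_sub_right, inner_smul_left, inner_smul_right,
      map_mul, Complex.conj_I, Complex.conj_ofNat, c1, c2, c3, c4, c5, c6]
    simp only [Complex.add_re, Complex.sub_re, Complex.mul_re, Complex.mul_im,
      Complex.add_im, Complex.sub_im, Complex.neg_re, Complex.neg_im, Complex.I_re,
      Complex.I_im, Complex.conj_re, Complex.conj_im, Complex.re_ofNat, Complex.im_ofNat]
    ring_nf
    rw [cP]
    ring
  refine ⟨key, ?_⟩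
  intro hcomm s t
  have hder0 : ∀ r : ℝ, HasDerivAt
      (fun s : ℝ => ‖deriv u s - Complex.I • k (u s)‖ ^ 2
        + ⟪(h ⟨u s, hdom s⟩ : H) + k (k (u s)), u s⟫.re) 0 r := by
    intro r
    have h7 := key r
    rwa [hcomm ⟨u r, hdom r⟩, mul_zero] at h7
  exact is_const_of_deriv_eq_zero (fun r => (hder0 r).differentiableAt)
    (fun r => (hder0 r).deriv) s t
end
end

section
/- Assume (h0 v | v) ≥ 0 for all v ∈ D(h), and suppose there is a constant C ≥ 0 such that 2 |Im( ( k v | h v ) )| ≤ C (h0 v | v) for all v ∈ D(h) (a form bound on the commutator [ik,h] by h0). Let u : ℝ → H be twice continuously differentiable with u(t) ∈ D(h) for all t, solving u''(t) = 2 i k u'(t) − h u(t). Then the homogeneous energy E(t) := ‖u'(t) − i k u(t)‖² + (h0 u(t) | u(t)) satisfies E(t) ≤ e^{C|t|} E(0) for all t ∈ ℝ. (This is the exponential bound underlying the generation of the C₀-group on the homogeneous energy space.) -/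
open Complex

noncomputable section

variable {H : Type*} [NormedAddCommGroup H] [InnerProductSpace ℂ H] [CompleteSpace H]

/-- The key algebraic identity for the energy derivative. -/
lemma energy_deriv_identity (k : H →L[ℂ] H) (hk : IsSelfAdjoint k) (a b c : H) :
    ((inner ℂ (b - Complex.I • k a) (Complex.I • k b - c) : ℂ)
        + inner ℂ (Complex.I • k b - c) (b - Complex.I • k a)).re
      + ((inner ℂ c b : ℂ) + inner ℂ b c).re
      + ((inner ℂ (k (k a)) b : ℂ) + inner ℂ (k (k b)) a).re
    = 2 * (inner ℂ (k a) c : ℂ).im := by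
  have hsymm := hk.isSymmetric
  have h1 : (inner ℂ (k (k a)) b : ℂ) = inner ℂ (k a) (k b) := hsymm (k a) b
  have h2 : (inner ℂ (k (k b)) a : ℂ) = inner ℂ (k b) (k a) := hsymm (k b) a
  have hw : (inner ℂ b (k b) : ℂ).im = 0 := by
    have h3 := hsymm b b
    simp only [ContinuousLinearMap.coe_coe] at h3
    have h4 : (inner ℂ (k b) b : ℂ) = starRingEnd ℂ (inner ℂ b (k b)) := (inner_conj_symm _ _).symm
    rw [h3] at h4
    have h5 := congrArg Complex.im h4
    simp only [Complex.conj_im] at h5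
    linarith
  have hpair : ∀ x y : H, ((inner ℂ x y : ℂ) + inner ℂ y x).re = 2 * (inner ℂ x y : ℂ).re := by
    intro x y
    have : (inner ℂ y x : ℂ) = starRingEnd ℂ (inner ℂ x y) := (inner_conj_symm y x).symm
    rw [this, Complex.add_re, Complex.conj_re]
    ring
  have h5 : (inner ℂ c b : ℂ) = starRingEnd ℂ (inner ℂ b c) := (inner_conj_symm c b).symm
  rw [h1, h2, hpair, hpair, hpair, h5]
  simp only [inner_sub_left, inner_sub_right, inner_smul_left, inner_smul_right, Complex.conj_I]
  simp only [Complex.mul_re, Complex.mul_im, Complex.neg_re, Complex.neg_im, Complex.sub_re,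
    Complex.sub_im, Complex.add_re, Complex.add_im, Complex.I_re, Complex.I_im, Complex.conj_re,
    Complex.conj_im]
  ring_nf
  nlinarith [hw]


/-- Gronwall-type wrapper: from `|E'| ≤ C E` deduce `E t ≤ exp(C|t|) E 0`. -/
lemma gronwall_abs {E D : ℝ → ℝ} {C : ℝ}
    (hE : ∀ t, HasDerivAt E (D t) t) (hpos : ∀ t, 0 ≤ E t)
    (hbound : ∀ t, |D t| ≤ C * E t) :
    ∀ t : ℝ, E t ≤ Real.exp (C * |t|) * E 0 := by
  have main : ∀ (F G : ℝ → ℝ), (∀ t, HasDerivAt F (G t) t) → (∀ t, 0 ≤ F t) →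
      (∀ t, |G t| ≤ C * F t) → ∀ t : ℝ, 0 ≤ t → F t ≤ Real.exp (C * t) * F 0 := by
    intro F G hF hFpos hFb t ht
    have := norm_le_gronwallBound_of_norm_deriv_right_le (f := F) (f' := G)
      (δ := F 0) (K := C) (ε := 0) (a := 0) (b := t)
      (fun s _ => (hF s).continuousAt.continuousWithinAt)
      (fun s _ => (hF s).hasDerivWithinAt)
      (by rw [Real.norm_of_nonneg (hFpos 0)])
      (fun s _ => by
        rw [Real.norm_eq_abs, Real.norm_of_nonneg (hFpos s), add_zero]
        exact hFb s)
      t (Set.mem_Icc.mpr ⟨ht, le_refl t⟩)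
    rw [Real.norm_of_nonneg (hFpos t), sub_zero, gronwallBound_ε0] at this
    linarith [this]
  intro t
  rcases le_or_gt 0 t with ht | ht
  · rw [_root_.abs_of_nonneg ht]
    exact main E D hE hpos hbound t ht
  · have hE' : ∀ s, HasDerivAt (fun r => E (-r)) (-D (-s)) s := by
      intro s
      have := (hE (-s)).comp s (hasDerivAt_neg s)
      rw [mul_neg_one] at this
      exact this
    have := main (fun r => E (-r)) (fun r => -D (-r)) hE'
      (fun r => hpos (-r)) (fun r => by simpa using hbound (-r)) (-t) (by linarith)
    rw [_root_.abs_of_neg ht]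
    simpa using this

/-- If `h₀ ≥ 0` and `2|Im (kv|hv)| ≤ C (h₀v|v)`, then the homogeneous energy
of a solution of `u'' = 2ik u' - h u` satisfies `E(t) ≤ e^{C|t|} E(0)`. -/
theorem homogeneous_energy_exponential_bound
    (h : H →ₗ.[ℂ] H) (hsa : IsSelfAdjoint h)
    (k : H →L[ℂ] H) (hk : IsSelfAdjoint k)
    (hpos : ∀ v : h.domain, 0 ≤ h0Form h k v)
    (C : ℝ) (hC : 0 ≤ C)
    (hcomm : ∀ v : h.domain, 2 * |(inner ℂ (k (v : H)) (h v) : ℂ).im| ≤ C * h0Form h k v)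
    (u : ℝ → H) (hreg : ContDiff ℝ 2 u)
    (hdom : ∀ t : ℝ, u t ∈ h.domain)
    (hode : ∀ t : ℝ,
      deriv (deriv u) t = (2 * Complex.I) • k (deriv u t) - h ⟨u t, hdom t⟩) :
    ∀ t : ℝ,
      ‖deriv u t - Complex.I • k (u t)‖ ^ 2 + h0Form h k ⟨u t, hdom t⟩
        ≤ Real.exp (C * |t|) *
          (‖deriv u 0 - Complex.I • k (u 0)‖ ^ 2 + h0Form h k ⟨u 0, hdom 0⟩) := by
  -- regularity facts
  have h0' : ContDiff ℝ ((1:ℕ) + 1) u := by exact_mod_cast hreg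
  have h1 : ContDiff ℝ ((0:ℕ) + 1) (deriv u) := by
    exact_mod_cast (contDiff_succ_iff_deriv.mp h0').2.2
  have hu1 : ∀ t, HasDerivAt u (deriv u t) t := fun t =>
    ((hreg.differentiable (by norm_num)) t).hasDerivAt
  have hu2 : ∀ t, HasDerivAt (deriv u) (deriv (deriv u) t) t := fun t =>
    ((h1.differentiable (by norm_num)) t).hasDerivAt
  have hu''c : Continuous (deriv (deriv u)) :=
    ((contDiff_succ_iff_deriv.mp h1).2.2).continuous
  -- abbreviations
  set g : ℝ → H := fun t => (2 * Complex.I) • k (deriv u t) - deriv (deriv u) t with hgdef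
  have hg : ∀ t, (h ⟨u t, hdom t⟩ : H) = g t := by
    intro t
    simp only [hgdef, hode t]
    abel
  have hgc : Continuous g := by
    have : Continuous (deriv u) := h1.continuous
    fun_prop
  -- symmetry of h
  have hsym : ∀ x y : h.domain, (inner ℂ (h x) (y : H) : ℂ) = inner ℂ (x : H) (h y) := by
    have hd := hsa.dense_domain
    have hfa := LinearPMap.adjoint_isFormalAdjoint hd
    rw [LinearPMap.isSelfAdjoint_def] at hsa
    rw [hsa] at hfa
    exact hfa
  -- the energy function
  set v : ℝ → H := fun t => deriv u t - Complex.I • k (u t) with hvdef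
  set E : ℝ → ℝ := fun t => ‖v t‖ ^ 2 + (inner ℂ (g t + k (k (u t))) (u t) : ℂ).re with hEdef
  have hEform : ∀ t, E t = ‖v t‖ ^ 2 + h0Form h k ⟨u t, hdom t⟩ := by
    intro t
    simp only [hEdef, h0Form, hg t]
  have hEpos : ∀ t, 0 ≤ E t := by
    intro t
    rw [hEform t]
    exact add_nonneg (by positivity) (hpos _)
  -- derivative of v
  have hku : ∀ t, HasDerivAt (fun s => k (u s)) (k (deriv u t)) t := fun t =>
    ((k.restrictScalars ℝ).hasFDerivAt).comp_hasDerivAt t (hu1 t)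
  have hv : ∀ t, HasDerivAt v (deriv (deriv u) t - Complex.I • k (deriv u t)) t := fun t =>
    (hu2 t).sub ((hku t).const_smul Complex.I)
  -- derivative of the hard term ⟪g s, u s⟫
  have hGder : ∀ t, HasDerivAt (fun s => (inner ℂ (g s) (u s) : ℂ))
      ((inner ℂ (g t) (deriv u t) : ℂ) + inner ℂ (deriv u t) (g t)) t := by
    intro t
    have hswap : ∀ s, (inner ℂ (g s - g t) (u t) : ℂ) = inner ℂ (u s - u t) (g t) := by
      intro s
      have h1 : g s - g t = h (⟨u s, hdom s⟩ - ⟨u t, hdom t⟩) := by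
        rw [← hg s, ← hg t, LinearPMap.map_sub]
      rw [h1, hsym (⟨u s, hdom s⟩ - ⟨u t, hdom t⟩) ⟨u t, hdom t⟩]
      simp [hg t]
    have key : (fun s => (inner ℂ (g s) (u s) : ℂ)) = fun s =>
        (inner ℂ (g s - g t) (u s - u t) : ℂ) + inner ℂ (g t) (u s - u t)
          + inner ℂ (u s - u t) (g t) + inner ℂ (g t) (u t) := by
      funext s
      rw [← hswap s]
      simp only [inner_sub_left, inner_sub_right]
      ring
    rw [key]
    have hus : HasDerivAt (fun s => u s - u t) (deriv u t) t := by
      simpa using (hu1 t).sub_const (u t)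
    have d2 : HasDerivAt (fun s => (inner ℂ (g t) (u s - u t) : ℂ))
        (inner ℂ (g t) (deriv u t)) t := by
      simpa only [inner_zero_left, inner_zero_right, add_zero, zero_add] using HasDerivAt.inner ℂ (hasDerivAt_const t (g t)) hus
    have d3 : HasDerivAt (fun s => (inner ℂ (u s - u t) (g t) : ℂ))
        (inner ℂ (deriv u t) (g t)) t := by
      simpa only [inner_zero_left, inner_zero_right, add_zero, zero_add] using HasDerivAt.inner ℂ hus (hasDerivAt_const t (g t))
    have d1 : HasDerivAt (fun s => (inner ℂ (g s - g t) (u s - u t) : ℂ)) 0 t := by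
      rw [hasDerivAt_iff_isLittleO]
      have hO : (fun s => u s - u t) =O[nhds t] (fun s => s - t) := (hu1 t).isBigO_sub
      have ho : (fun s => g s - g t) =o[nhds t] (fun _ : ℝ => (1:ℝ)) := by
        rw [Asymptotics.isLittleO_one_iff]
        have : Filter.Tendsto g (nhds t) (nhds (g t)) := hgc.continuousAt
        simpa using this.sub_const (g t)
      have hprod : (fun s => ‖g s - g t‖ * ‖u s - u t‖) =o[nhds t]
          (fun s => ‖(1:ℝ)‖ * ‖s - t‖) := ho.norm_norm.mul_isBigO hO.norm_norm
      have hbig : (fun s => (inner ℂ (g s - g t) (u s - u t) : ℂ)) =O[nhds t]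
          (fun s => ‖g s - g t‖ * ‖u s - u t‖) := by
        apply Asymptotics.isBigO_of_le
        intro s
        rw [Real.norm_of_nonneg (by positivity)]
        exact norm_inner_le_norm _ _
      have h3' := hbig.trans_isLittleO hprod
      have h2 : (fun s : ℝ => ‖(1:ℝ)‖ * ‖s - t‖) =O[nhds t] (fun s => s - t) := by
        apply Asymptotics.isBigO_of_le
        intro s
        simp
      have h3 := h3'.trans_isBigO h2
      simpa using h3
    have comb := ((d1.add d2).add d3).add (hasDerivAt_const t (inner ℂ (g t) (u t) : ℂ))
    simp only [zero_add, add_zero] at comb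
    exact comb
  -- derivative of the k² term
  have hKder : ∀ t, HasDerivAt (fun s => (inner ℂ (k (k (u s))) (u s) : ℂ))
      ((inner ℂ (k (k (u t))) (deriv u t) : ℂ) + inner ℂ (k (k (deriv u t))) (u t)) t := by
    intro t
    exact HasDerivAt.inner ℂ
      (((k.restrictScalars ℝ).hasFDerivAt).comp_hasDerivAt t (hku t)) (hu1 t)
  -- derivative of ‖v‖²
  have hNder : ∀ t, HasDerivAt (fun s => ‖v s‖ ^ 2)
      ((inner ℂ (v t) (deriv (deriv u) t - Complex.I • k (deriv u t)) : ℂ)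
        + inner ℂ (deriv (deriv u) t - Complex.I • k (deriv u t)) (v t)).re t := by
    intro t
    have := (HasDerivAt.inner ℂ (hv t) (hv t))
    have h2 := Complex.reCLM.hasFDerivAt.comp_hasDerivAt t this
    have heq : (fun s => Complex.reCLM (inner ℂ (v s) (v s) : ℂ)) = fun s => ‖v s‖ ^ 2 := by
      funext s
      simp [Complex.reCLM_apply, ← inner_self_eq_norm_sq (𝕜 := ℂ)]
    rw [← heq]
    exact h2
  -- total derivative
  set D : ℝ → ℝ := fun t => 2 * (inner ℂ (k (u t)) (g t) : ℂ).im with hDdef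
  have hEder : ∀ t, HasDerivAt E (D t) t := by
    intro t
    have hre : ∀ (F : ℝ → ℂ) (w : ℂ), HasDerivAt F w t →
        HasDerivAt (fun s => (F s).re) w.re t := fun F w hF =>
      Complex.reCLM.hasFDerivAt.comp_hasDerivAt t hF
    have h1 := (hNder t).add ((hre _ _ (hGder t)).add (hre _ _ (hKder t)))
    have hfun : E = fun s => ‖v s‖ ^ 2 + ((inner ℂ (g s) (u s) : ℂ).re
        + (inner ℂ (k (k (u s))) (u s) : ℂ).re) := by
      funext s
      simp [hEdef, inner_add_left]
    have hb : deriv (deriv u) t - Complex.I • k (deriv u t)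
        = Complex.I • k (deriv u t) - g t := by
      simp only [hgdef]
      rw [two_mul, add_smul]
      abel
    rw [hfun]
    refine h1.congr_deriv ?_
    rw [hb]
    have hid := energy_deriv_identity k hk (u t) (deriv u t) (g t)
    rw [hDdef]
    simp only [hvdef]
    linarith [hid]
  -- bound on the derivative
  have hDbound : ∀ t, |D t| ≤ C * E t := by
    intro t
    have h1' := hcomm ⟨u t, hdom t⟩
    simp only [hg t] at h1'
    have : |D t| ≤ C * h0Form h k ⟨u t, hdom t⟩ := by
      rw [hDdef]
      calc |2 * (inner ℂ (k (u t)) (g t) : ℂ).im| = 2 * |(inner ℂ (k (u t)) (g t) : ℂ).im| := by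
            rw [abs_mul]; norm_num
        _ ≤ C * h0Form h k ⟨u t, hdom t⟩ := by
            have := hcomm ⟨u t, hdom t⟩
            rwa [hg t] at this
    refine this.trans ?_
    rw [hEform t]
    nlinarith [hpos ⟨u t, hdom t⟩, sq_nonneg ‖v t‖]
  -- conclude by Gronwall
  intro t
  have := gronwall_abs hEder hEpos hDbound t
  rw [hEform t, hEform 0] at this
  exact this

end
end

section
/- Let α : ℝ → ℝ be a continuous nonnegative function with m := inf_{|x| ≤ 1} α(x) > 0. Then there exists a constant C > 0, depending only on m, such that for every continuously differentiable compactly supported function u : ℝ → ℂ, ∫_ℝ (1 + x²)^{-1} |u(x)|² dx ≤ C ∫_ℝ ( |u'(x)|² + α(x)² |u(x)|² ) dx. (This is the one-dimensional Hardy-type inequality underlying the weighted estimate ‖⟨x⟩^{-1}u‖ ≲ ‖h₀^{1/2}u‖ in the geometric setting.) -/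
open MeasureTheory

noncomputable section

namespace HardyAux

open Real

/-- The comparison function. -/
def g (x : ℝ) : ℝ := Real.arctan x - (π/2) * (4*x / Real.sqrt (1+16*x^2))

lemma Wpos (x : ℝ) : (0:ℝ) < 1 + 16*x^2 := by nlinarith [sq_nonneg x]

lemma Spos (x : ℝ) : (0:ℝ) < Real.sqrt (1+16*x^2) := Real.sqrt_pos.mpr (Wpos x)

lemma Ssq (x : ℝ) : Real.sqrt (1+16*x^2) ^ 2 = 1 + 16*x^2 := Real.sq_sqrt (Wpos x).le

lemma S_one_le (x : ℝ) : (1:ℝ) ≤ Real.sqrt (1+16*x^2) := by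
  have := Real.sqrt_le_sqrt (show (1:ℝ) ≤ 1+16*x^2 by nlinarith [sq_nonneg x])
  simpa using this

lemma S_ge (x : ℝ) : 4*|x| ≤ Real.sqrt (1+16*x^2) := by
  rw [show (4*|x|) = Real.sqrt ((4*|x|)^2) from (Real.sqrt_sq (by positivity)).symm]
  exact Real.sqrt_le_sqrt (by rw [mul_pow, sq_abs]; nlinarith)

lemma arctan_le_self {x : ℝ} (hx : 0 ≤ x) : Real.arctan x ≤ x := by
  have h : Monotone (fun y : ℝ => y - Real.arctan y) := by
    apply monotone_of_deriv_nonneg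
    · exact differentiable_id.sub Real.differentiable_arctan
    · intro y
      have hd : HasDerivAt (fun y : ℝ => y - Real.arctan y) (1 - (1 + y^2)⁻¹) y :=
        (hasDerivAt_id y).sub (Real.hasDerivAt_arctan' y)
      rw [hd.deriv]
      have h1 : (0:ℝ) < 1 + y^2 := by positivity
      have h2 : (1 + y^2)⁻¹ ≤ 1 := by
        rw [inv_le_one_iff₀]; right; nlinarith [sq_nonneg y]
      linarith
  have := h hx
  simpa using this

lemma hasDerivAt_g (x : ℝ) :
    HasDerivAt g ((1 + x^2)⁻¹ - 2*π / (Real.sqrt (1+16*x^2))^3) x := by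
  have hS := Spos x
  have hSsq := Ssq x
  have h1 : HasDerivAt (fun x : ℝ => 1 + 16*x^2) (32*x) x := by
    refine (((hasDerivAt_pow 2 x).const_mul (16:ℝ)).const_add (1:ℝ)).congr_deriv ?_
    norm_num
    ring
  have h2 : HasDerivAt (fun x : ℝ => Real.sqrt (1+16*x^2))
      (16*x / Real.sqrt (1+16*x^2)) x := by
    have := (Real.hasDerivAt_sqrt (ne_of_gt (Wpos x))).comp x h1
    refine this.congr_deriv ?_
    field_simp
    ring
  have h3 : HasDerivAt (fun x : ℝ => 4*x / Real.sqrt (1+16*x^2))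
      ((4 * Real.sqrt (1+16*x^2) - 4*x*(16*x / Real.sqrt (1+16*x^2)))
        / (Real.sqrt (1+16*x^2))^2) x := by
    have := (((hasDerivAt_id x).const_mul (4:ℝ)).div h2 (ne_of_gt hS))
    simp only [mul_one, id] at this
    exact this
  have hnum : 4 * Real.sqrt (1+16*x^2) - 4*x*(16*x / Real.sqrt (1+16*x^2))
      = 4 / Real.sqrt (1+16*x^2) := by
    field_simp
    linear_combination hSsq
  have h4 : (4 * Real.sqrt (1+16*x^2) - 4*x*(16*x / Real.sqrt (1+16*x^2)))
        / (Real.sqrt (1+16*x^2))^2 = 4 / (Real.sqrt (1+16*x^2))^3 := by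
    rw [hnum, div_div]
    ring_nf
  rw [h4] at h3
  have := (Real.hasDerivAt_arctan' x).sub (h3.const_mul (π/2))
  refine this.congr_deriv ?_
  ring

lemma g_abs_le (x : ℝ) : |g x| ≤ π := by
  have h1 : |Real.arctan x| ≤ π/2 :=
    le_of_lt (abs_lt.mpr ⟨Real.neg_pi_div_two_lt_arctan x, Real.arctan_lt_pi_div_two x⟩)
  have h2 : |4*x / Real.sqrt (1+16*x^2)| ≤ 1 := by
    rw [abs_div, abs_of_pos (Spos x), div_le_one (Spos x)]
    calc |4*x| = 4*|x| := by rw [abs_mul]; simp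
    _ ≤ _ := S_ge x
  have h3 : |(π/2) * (4*x / Real.sqrt (1+16*x^2))| ≤ π/2 := by
    rw [abs_mul, abs_of_pos (by positivity : (0:ℝ) < π/2)]
    nlinarith [Real.pi_pos]
  calc |g x| ≤ |Real.arctan x| + |(π/2) * (4*x / Real.sqrt (1+16*x^2))| := abs_sub _ _
  _ ≤ π/2 + π/2 := add_le_add h1 h3
  _ = π := by ring

lemma g_tail {x : ℝ} (hx : 1 ≤ x) : |g x| ≤ 2/x := by
  have hx0 : 0 < x := by linarith
  have hS := Spos x
  have hSsq := Ssq x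
  have hS4 : 4*x ≤ Real.sqrt (1+16*x^2) := by
    have := S_ge x; rwa [abs_of_pos hx0] at this
  have t1 : 0 ≤ π/2 - Real.arctan x := by linarith [Real.arctan_lt_pi_div_two x]
  have t2 : π/2 - Real.arctan x ≤ 1/x := by
    rw [← Real.arctan_inv_of_pos hx0]
    have := arctan_le_self (le_of_lt (inv_pos.mpr hx0))
    rw [one_div]; exact this
  have t3 : 0 ≤ 1 - 4*x / Real.sqrt (1+16*x^2) := by
    rw [sub_nonneg, div_le_one hS]; exact hS4
  have t4 : 1 - 4*x / Real.sqrt (1+16*x^2) ≤ 1/(32*x^2) := by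
    have expand : (Real.sqrt (1+16*x^2) - 4*x) * (Real.sqrt (1+16*x^2) + 4*x) = 1 := by
      nlinarith [hSsq]
    have key : (Real.sqrt (1+16*x^2) - 4*x) * (8*x) ≤ 1 := by
      nlinarith [hS4, hx0]
    have hrw : 1 - 4*x / Real.sqrt (1+16*x^2) = (Real.sqrt (1+16*x^2) - 4*x) / Real.sqrt (1+16*x^2) := by
      field_simp
    rw [hrw, div_le_div_iff₀ hS (by positivity)]
    nlinarith [key, hS4, hx0, sub_nonneg.mpr hS4]
  have hgx : g x = -(π/2 - Real.arctan x) + (π/2) * (1 - 4*x / Real.sqrt (1+16*x^2)) := by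
    unfold g; ring
  have hpi : π ≤ 3.15 := by linarith [Real.pi_lt_d2]
  have : |g x| ≤ (π/2 - Real.arctan x) + (π/2) * (1 - 4*x / Real.sqrt (1+16*x^2)) := by
    rw [hgx]
    calc |_| ≤ |-(π/2 - Real.arctan x)| + |(π/2) * (1 - 4*x / Real.sqrt (1+16*x^2))| :=
        abs_add_le _ _
    _ = (π/2 - Real.arctan x) + (π/2) * (1 - 4*x / Real.sqrt (1+16*x^2)) := by
        rw [abs_neg, abs_of_nonneg t1, abs_of_nonneg (mul_nonneg (by positivity) t3)]
  refine this.trans ?_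
  have hx2 : 1 ≤ x^2 := by nlinarith
  have h5 : (π/2) * (1 - 4*x / Real.sqrt (1+16*x^2)) ≤ (π/2) * (1/(32*x^2)) :=
    mul_le_mul_of_nonneg_left t4 (by positivity)
  have h6 : (π/2) * (1/(32*x^2)) ≤ 1/x := by
    rw [show (π/2) * (1/(32*x^2)) = π/(64*x^2) by ring, div_le_div_iff₀ (by positivity) hx0]
    nlinarith [Real.pi_pos, hx0, hx2, hpi]
  calc (π/2 - Real.arctan x) + (π/2) * (1 - 4*x / Real.sqrt (1+16*x^2))
      ≤ 1/x + 1/x := add_le_add t2 (h5.trans h6)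
  _ = 2/x := by ring

lemma g_neg (x : ℝ) : g (-x) = - g x := by
  unfold g
  rw [Real.arctan_neg]
  have : (-x)^2 = x^2 := by ring
  rw [show 1 + 16*(-x)^2 = 1 + 16*x^2 by rw [this]]
  ring

lemma g_sq_bound (x : ℝ) : 4 * (g x)^2 * (1+x^2) ≤ 80 := by
  have hpi : π ≤ 3.15 := by linarith [Real.pi_lt_d2]
  rcases le_or_gt (|x|) 1 with h | h
  · have h1 : |g x| ≤ π := g_abs_le x
    have h2 : (g x)^2 ≤ π^2 := by nlinarith [abs_nonneg (g x), sq_abs (g x), Real.pi_pos]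
    have h3 : x^2 ≤ 1 := by nlinarith [sq_abs x, abs_nonneg x]
    nlinarith [Real.pi_pos, sq_nonneg (g x)]
  · have h1 : |g (|x|)| ≤ 2/|x| := g_tail h.le
    have h2 : |g x| ≤ 2/|x| := by
      rcases abs_choice x with hc | hc
      · rw [hc] at h1; rw [hc]; exact h1
      · rw [hc] at h1; rw [g_neg, abs_neg] at h1; rw [hc]; exact h1
    have hx0 : (0:ℝ) < |x| := by linarith
    have h3 : (g x)^2 ≤ 4/x^2 := by
      have := sq_le_sq' (by linarith [abs_nonneg (g x), neg_abs_le (g x)] : -(2/|x|) ≤ g x)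
        (le_trans (le_abs_self _) h2)
      calc (g x)^2 ≤ (2/|x|)^2 := by
            have hle : |g x| ≤ 2/|x| := h2
            nlinarith [abs_nonneg (g x), sq_abs (g x), hx0]
      _ = 4/x^2 := by rw [div_pow, sq_abs]; norm_num
    have hx2 : 1 ≤ x^2 := by nlinarith [sq_abs x]
    have hx2' : (0:ℝ) < x^2 := by linarith
    calc 4 * (g x)^2 * (1+x^2) ≤ 4 * (4/x^2) * (1+x^2) := by
          apply mul_le_mul_of_nonneg_right _ (by positivity)
          nlinarith [h3]
    _ = 16/x^2 + 16 := by
          have hx2ne := hx2'.ne'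
          have e : (16:ℝ)/x^2 * x^2 = 16 := div_mul_cancel₀ (16:ℝ) hx2ne
          linear_combination e
    _ ≤ 80 := by
          have : 16/x^2 ≤ 16 := by rw [div_le_iff₀ hx2']; nlinarith
          linarith

lemma h_le_7 (x : ℝ) : 2*π/(Real.sqrt (1+16*x^2))^3 ≤ 7 := by
  have hS := S_one_le x
  have hS3 : (1:ℝ) ≤ (Real.sqrt (1+16*x^2))^3 := one_le_pow₀ hS
  have hpi : π ≤ 3.15 := by linarith [Real.pi_lt_d2]
  calc 2*π/(Real.sqrt (1+16*x^2))^3 ≤ 2*π/1 :=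
      div_le_div_of_nonneg_left (by positivity) (by norm_num) hS3
  _ = 2*π := by ring
  _ ≤ 7 := by linarith

lemma h_tail {x : ℝ} (hx : 1 ≤ |x|) :
    2*π/(Real.sqrt (1+16*x^2))^3 ≤ (1/4) * (1+x^2)⁻¹ := by
  have hS := Spos x
  have hS4 := S_ge x
  have hx0 : (0:ℝ) < |x| := by linarith
  have hx2 : 1 ≤ x^2 := by nlinarith [sq_abs x]
  have hS3 : (4*|x|)^3 ≤ (Real.sqrt (1+16*x^2))^3 :=
    pow_le_pow_left₀ (by positivity) hS4 3
  have hcube : 64*x^2 ≤ (Real.sqrt (1+16*x^2))^3 := by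
    have : (4*|x|)^3 = 64*|x|^3 := by ring
    have h2 : 64*x^2 ≤ 64*|x|^3 := by
      have : x^2 = |x|^2 := (sq_abs x).symm
      nlinarith [hx0]
    linarith [hS3, this ▸ hS3]
  have hpi : π ≤ 3.15 := by linarith [Real.pi_lt_d2]
  rw [show (1/4) * (1+x^2)⁻¹ = 1/(4*(1+x^2)) by field_simp]
  rw [div_le_div_iff₀ (by positivity) (by positivity)]
  nlinarith [hcube, hx2, Real.pi_pos]

end HardyAux

open HardyAux

/-- One-dimensional Hardy-type inequality: if `α ≥ 0` is continuous with
`α ≥ m > 0` on `[-1,1]`, then `∫ ⟨x⟩⁻² |u|² ≤ C ∫ (|u'|² + α²|u|²)` for all compactly supported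
`C¹` functions `u`, with `C` depending only on `m`. -/
theorem hardy_type_inequality :
    ∀ m : ℝ, 0 < m → ∃ C : ℝ, 0 < C ∧
      ∀ α : ℝ → ℝ, Continuous α → (∀ x : ℝ, 0 ≤ α x) → (∀ x : ℝ, |x| ≤ 1 → m ≤ α x) →
        ∀ u : ℝ → ℂ, ContDiff ℝ 1 u → HasCompactSupport u →
          (∫ x : ℝ, (1 + x ^ 2)⁻¹ * ‖u x‖ ^ 2)
            ≤ C * ∫ x : ℝ, (‖deriv u x‖ ^ 2 + (α x) ^ 2 * ‖u x‖ ^ 2) := by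
  intro m hm
  refine ⟨160 + 14/m^2, by positivity, ?_⟩
  intro α hαc hα0 hαm u hu hsupp
  have hud : Differentiable ℝ u := hu.differentiable one_ne_zero
  have hu' : ∀ x, HasDerivAt u (deriv u x) x := fun x => (hud x).hasDerivAt
  set φ : ℝ → ℝ := fun x => ‖u x‖^2 with hφdef
  have hφd : ∀ x : ℝ, HasDerivAt φ (2 * (inner ℝ (u x) (deriv u x) : ℝ)) x :=
    fun x => (hu' x).norm_sq
  have hφc : Continuous φ := hud.continuous.norm.pow 2
  have hφs : HasCompactSupport φ := by
    have h : φ = (fun z : ℂ => ‖z‖^2) ∘ u := rfl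
    rw [h]
    exact hsupp.comp_left (by simp)
  have hgC : ContDiff ℝ 1 g := by
    have h1 : ContDiff ℝ 1 fun x : ℝ => Real.sqrt (1+16*x^2) := by
      apply ContDiff.sqrt
      · exact contDiff_const.add (contDiff_const.mul (contDiff_id.pow 2))
      · intro x; exact ne_of_gt (Wpos x)
    exact Real.contDiff_arctan.sub
      (contDiff_const.mul ((contDiff_const.mul contDiff_id).div h1 (fun x => ne_of_gt (Spos x))))
  set F : ℝ → ℝ := fun x => g x * φ x with hFdef
  have hFC : ContDiff ℝ 1 F := hgC.mul (hu.norm_sq ℝ)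
  have hFs : HasCompactSupport F := hφs.mul_left
  have hderivF : ∀ x : ℝ, deriv F x
      = ((1+x^2)⁻¹ - 2*Real.pi/(Real.sqrt (1+16*x^2))^3) * φ x
        + g x * (2 * (inner ℝ (u x) (deriv u x) : ℝ)) :=
    fun x => ((hasDerivAt_g x).mul (hφd x)).deriv
  have hDuc : Continuous (deriv u) := hu.continuous_deriv le_rfl
  have hLc : Continuous (fun x : ℝ => (1 + x^2)⁻¹ * φ x) := by
    apply Continuous.mul _ hφc
    exact (continuous_const.add (continuous_pow 2)).inv₀ (fun x => ne_of_gt (show (0:ℝ) < 1 + x^2 by positivity))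
  have hLint : Integrable (fun x : ℝ => (1 + x^2)⁻¹ * φ x) :=
    hLc.integrable_of_hasCompactSupport hφs.mul_left
  have hR1s : HasCompactSupport (fun x : ℝ => ‖deriv u x‖^2) := by
    have h : (fun x : ℝ => ‖deriv u x‖^2) = (fun z : ℂ => ‖z‖^2) ∘ (deriv u) := rfl
    rw [h]; exact (hsupp.deriv).comp_left (by simp)
  have hRc : Continuous (fun x : ℝ => ‖deriv u x‖^2 + (α x)^2 * φ x) :=
    (hDuc.norm.pow 2).add ((hαc.pow 2).mul hφc)
  have hRint : Integrable (fun x : ℝ => ‖deriv u x‖^2 + (α x)^2 * φ x) :=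
    hRc.integrable_of_hasCompactSupport (hR1s.add hφs.mul_left)
  have hDFc : Continuous (deriv F) := hFC.continuous_deriv le_rfl
  have hDFint : Integrable (deriv F) := hDFc.integrable_of_hasCompactSupport hFs.deriv
  have hint0 : ∫ x : ℝ, deriv F x = 0 := by
    have h1 : ∫ x in Set.Iic (0:ℝ), deriv F x = F 0 :=
      HasCompactSupport.integral_Iic_deriv_eq hFC hFs 0
    have h2 : ∫ x in Set.Ioi (0:ℝ), deriv F x = -F 0 :=
      HasCompactSupport.integral_Ioi_deriv_eq hFC hFs 0
    have h3 := intervalIntegral.integral_Iic_add_Ioi (b := (0:ℝ)) hDFint.integrableOn hDFint.integrableOn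
    rw [h1, h2] at h3
    linarith [h3]
  have key : ∀ x : ℝ, (1/2) * ((1 + x^2)⁻¹ * φ x)
      ≤ deriv F x + (80 + 7/m^2) * (‖deriv u x‖^2 + (α x)^2 * φ x) := by
    intro x
    have hW : (0:ℝ) < 1 + x^2 := by positivity
    have hw : (0:ℝ) < (1 + x^2)⁻¹ := by positivity
    have hwW : (1 + x^2)⁻¹ * (1 + x^2) = 1 := inv_mul_cancel₀ (ne_of_gt hW)
    have hCS : |(inner ℝ (u x) (deriv u x) : ℝ)| ≤ ‖u x‖ * ‖deriv u x‖ :=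
      abs_real_inner_le_norm _ _
    have hgsq := g_sq_bound x
    have hφ0 : 0 ≤ φ x := by simpa [hφdef] using sq_nonneg ‖u x‖
    have hh : 2*Real.pi/(Real.sqrt (1+16*x^2))^3 ≤ (1/4) * (1 + x^2)⁻¹ + (7/m^2) * (α x)^2 := by
      rcases le_or_gt (|x|) 1 with hx | hx
      · have h7 := h_le_7 x
        have hα : m ≤ α x := hαm x hx
        have h8 : 7 ≤ (7/m^2) * (α x)^2 := by
          rw [div_mul_eq_mul_div, le_div_iff₀ (by positivity)]
          nlinarith [hα, hm]
        nlinarith [hw]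
      · have ht := h_tail hx.le
        have h9 : 0 ≤ (7/m^2) * (α x)^2 := by positivity
        linarith
    have e1 : 4*(g x)^2 ≤ 80 * (1 + x^2)⁻¹ := by
      nlinarith [mul_le_mul_of_nonneg_right hgsq hw.le, hwW, hw, sq_nonneg (g x)]
    have step1' : (1 + x^2)⁻¹ * (2 * |g x| * (‖u x‖ * ‖deriv u x‖))
        ≤ (1 + x^2)⁻¹ * ((1/4)*(1 + x^2)⁻¹*‖u x‖^2 + 80*‖deriv u x‖^2) := by
      nlinarith [sq_nonneg ((1/2)*(1 + x^2)⁻¹*‖u x‖ - 2 * |g x| * ‖deriv u x‖),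
        mul_le_mul_of_nonneg_right e1 (sq_nonneg ‖deriv u x‖), sq_abs (g x)]
    have step1 : 2 * |g x| * (‖u x‖ * ‖deriv u x‖)
        ≤ (1/4)*(1 + x^2)⁻¹*‖u x‖^2 + 80*‖deriv u x‖^2 :=
      (mul_le_mul_iff_right₀ hw).mp step1'
    have step2 : -(2*(g x)*(inner ℝ (u x) (deriv u x) : ℝ)) ≤ 2 * |g x| * (‖u x‖ * ‖deriv u x‖) := by
      calc -(2*(g x)*(inner ℝ (u x) (deriv u x) : ℝ)) ≤ |2*(g x)*(inner ℝ (u x) (deriv u x) : ℝ)| :=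
            neg_le_abs _
      _ = 2 * |g x| * |(inner ℝ (u x) (deriv u x) : ℝ)| := by
            rw [abs_mul, abs_mul]; norm_num
      _ ≤ 2 * |g x| * (‖u x‖ * ‖deriv u x‖) := by
            apply mul_le_mul_of_nonneg_left hCS (by positivity)
    have heq : (1 + x^2)⁻¹ * φ x = deriv F x + (2*Real.pi/(Real.sqrt (1+16*x^2))^3) * φ x
        - 2*(g x)*(inner ℝ (u x) (deriv u x) : ℝ) := by
      rw [hderivF x]; ring
    have hmul := mul_le_mul_of_nonneg_right hh hφ0
    have hφeq : φ x = ‖u x‖^2 := rfl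
    have main : (1/2) * ((1 + x^2)⁻¹ * φ x)
        ≤ deriv F x + 80*‖deriv u x‖^2 + (7/m^2) * (α x)^2 * φ x := by
      simp only [hφdef] at heq hmul ⊢
      linarith [heq, step1, step2, hmul]
    refine main.trans ?_
    have c1 : 0 ≤ (7/m^2) * ‖deriv u x‖^2 := by positivity
    have c2 : 0 ≤ 80 * ((α x)^2 * φ x) := by
      apply mul_nonneg (by norm_num)
      exact mul_nonneg (sq_nonneg _) hφ0
    have expand : (80 + 7/m^2) * (‖deriv u x‖^2 + (α x)^2 * φ x)
        = 80*‖deriv u x‖^2 + (7/m^2) * (α x)^2 * φ x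
          + ((7/m^2) * ‖deriv u x‖^2 + 80 * ((α x)^2 * φ x)) := by ring
    linarith
  have mono := integral_mono (μ := volume) (hLint.const_mul (1/2))
    (hDFint.add (hRint.const_mul (80 + 7/m^2))) key
  rw [integral_const_mul] at mono
  have hsplit := integral_add (μ := volume) hDFint (hRint.const_mul (80 + 7/m^2))
  simp only [Pi.add_apply] at mono
  rw [hsplit, hint0, integral_const_mul, zero_add] at mono
  have hRnn : 0 ≤ ∫ x : ℝ, (‖deriv u x‖^2 + (α x)^2 * φ x) := by
    apply integral_nonneg
    intro x
    have : 0 ≤ φ x := by simpa [hφdef] using sq_nonneg ‖u x‖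
    have := mul_nonneg (sq_nonneg (α x)) this
    positivity
  have hm2 : (0:ℝ) ≤ 7/m^2 := by positivity
  calc (∫ x : ℝ, (1 + x ^ 2)⁻¹ * ‖u x‖ ^ 2)
      = ∫ x : ℝ, (1 + x^2)⁻¹ * φ x := by rfl
  _ ≤ 2 * ((80 + 7/m^2) * ∫ x : ℝ, (‖deriv u x‖^2 + (α x)^2 * φ x)) := by linarith
  _ = (160 + 14/m^2) * ∫ x : ℝ, (‖deriv u x‖ ^ 2 + (α x) ^ 2 * ‖u x‖ ^ 2) := by
      rw [hφdef]; ring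
end
end

section
/- Let ℓ ∈ ℝ, R₁ < R₂, let u₀ : ℝ → ℂ be continuously differentiable, u₁ : ℝ → ℂ continuous, both vanishing outside [R₁,R₂], and assume ∫_ℝ ( u₁(τ) − iℓ u₀(τ) ) dτ = 0. Define u₀^in(x) := (1/2) ∫_x^∞ ( −u₀'(τ) − ( u₁(τ) − iℓ u₀(τ) ) ) dτ, u₁^in := (1/2)( u₁ − iℓ u₀ + u₀' ) + iℓ u₀^in, u₀^out(x) := (1/2) ∫_{−∞}^x ( u₀'(τ) − ( u₁(τ) − iℓ u₀(τ) ) ) dτ, and u₁^out := (1/2)( u₁ − iℓ u₀ − u₀' ) + iℓ u₀^out. Then: (i) u₀ = u₀^in + u₀^out and u₁ = u₁^in + u₁^out; (ii) (u₀^in, u₁^in) is incoming, i.e. u₁^in = (u₀^in)' + iℓ u₀^in, and (u₀^out, u₁^out) is outgoing, i.e. u₁^out = −(u₀^out)' + iℓ u₀^out; (iii) u₀^in and u₁^in vanish on [R₂, ∞), and u₀^out and u₁^out vanish on (−∞, R₁]. Moreover this decomposition into an incoming and an outgoing pair is unique: if both (v₀,v₁) is incoming and outgoing with v₀ vanishing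 at infinity, then v₀ = v₁ = 0. -/
open Complex MeasureTheory Filter

noncomputable section

private lemma zero_of_Ioi {h : ℝ → ℂ} (hc : Continuous h) {a : ℝ}
    (h0 : ∀ x, a < x → h x = 0) : ∀ x, a ≤ x → h x = 0 := by
  have ha : h a = 0 := by
    have h1 : Tendsto h (nhdsWithin a (Set.Ioi a)) (nhds (h a)) :=
      (hc.tendsto a).mono_left nhdsWithin_le_nhds
    have h2 : Tendsto h (nhdsWithin a (Set.Ioi a)) (nhds 0) := by
      refine tendsto_const_nhds.congr' ?_
      filter_upwards [self_mem_nhdsWithin] with y hy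
      exact (h0 y hy).symm
    exact tendsto_nhds_unique h1 h2
  intro x hx
  rcases eq_or_lt_of_le hx with rfl | hlt
  · exact ha
  · exact h0 x hlt

private lemma zero_of_Iio {h : ℝ → ℂ} (hc : Continuous h) {a : ℝ}
    (h0 : ∀ x, x < a → h x = 0) : ∀ x, x ≤ a → h x = 0 := by
  have ha : h a = 0 := by
    have h1 : Tendsto h (nhdsWithin a (Set.Iio a)) (nhds (h a)) :=
      (hc.tendsto a).mono_left nhdsWithin_le_nhds
    have h2 : Tendsto h (nhdsWithin a (Set.Iio a)) (nhds 0) := by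
      refine tendsto_const_nhds.congr' ?_
      filter_upwards [self_mem_nhdsWithin] with y hy
      exact (h0 y hy).symm
    exact tendsto_nhds_unique h1 h2
  intro x hx
  rcases eq_or_lt_of_le hx with rfl | hlt
  · exact ha
  · exact h0 x hlt

/-- Decomposition of compactly supported data of total zero charge into an
incoming and an outgoing pair, with the stated support properties, and uniqueness of such a
decomposition. -/
theorem incoming_outgoing_decomposition
    (ℓ R₁ R₂ : ℝ) (hR : R₁ < R₂)
    (u₀ u₁ : ℝ → ℂ) (hu₀ : ContDiff ℝ 1 u₀) (hu₁ : Continuous u₁)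
    (hsupp : ∀ x : ℝ, x ∉ Set.Icc R₁ R₂ → u₀ x = 0 ∧ u₁ x = 0)
    (hint : (∫ τ : ℝ, (u₁ τ - Complex.I * (ℓ : ℂ) * u₀ τ)) = 0)
    (u₀in u₁in u₀out u₁out : ℝ → ℂ)
    (hdef₀in : ∀ x : ℝ, u₀in x =
      (1 / 2 : ℂ) * ∫ τ in Set.Ioi x, (-(deriv u₀ τ) - (u₁ τ - Complex.I * (ℓ : ℂ) * u₀ τ)))
    (hdef₁in : ∀ x : ℝ, u₁in x =
      (1 / 2 : ℂ) * (u₁ x - Complex.I * (ℓ : ℂ) * u₀ x + deriv u₀ x)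
        + Complex.I * (ℓ : ℂ) * u₀in x)
    (hdef₀out : ∀ x : ℝ, u₀out x =
      (1 / 2 : ℂ) * ∫ τ in Set.Iio x, (deriv u₀ τ - (u₁ τ - Complex.I * (ℓ : ℂ) * u₀ τ)))
    (hdef₁out : ∀ x : ℝ, u₁out x =
      (1 / 2 : ℂ) * (u₁ x - Complex.I * (ℓ : ℂ) * u₀ x - deriv u₀ x)
        + Complex.I * (ℓ : ℂ) * u₀out x) :
    (∀ x : ℝ, u₀ x = u₀in x + u₀out x ∧ u₁ x = u₁in x + u₁out x) ∧
    (∀ x : ℝ, u₁in x = deriv u₀in x + Complex.I * (ℓ : ℂ) * u₀in x) ∧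
    (∀ x : ℝ, u₁out x = -(deriv u₀out x) + Complex.I * (ℓ : ℂ) * u₀out x) ∧
    (∀ x : ℝ, R₂ ≤ x → u₀in x = 0 ∧ u₁in x = 0) ∧
    (∀ x : ℝ, x ≤ R₁ → u₀out x = 0 ∧ u₁out x = 0) ∧
    (∀ v₀ v₁ : ℝ → ℂ, Differentiable ℝ v₀ →
      (∀ x : ℝ, v₁ x = deriv v₀ x + Complex.I * (ℓ : ℂ) * v₀ x) →
      (∀ x : ℝ, v₁ x = -(deriv v₀ x) + Complex.I * (ℓ : ℂ) * v₀ x) →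
      Tendsto v₀ atTop (nhds 0) →
      ∀ x : ℝ, v₀ x = 0 ∧ v₁ x = 0) := by
  have hfc : Continuous fun τ : ℝ => u₁ τ - Complex.I * (ℓ : ℂ) * u₀ τ :=
    hu₁.sub (continuous_const.mul hu₀.continuous)
  have hf0 : ∀ x : ℝ, x ∉ Set.Icc R₁ R₂ → u₁ x - Complex.I * (ℓ : ℂ) * u₀ x = 0 := by
    intro x hx
    simp [(hsupp x hx).1, (hsupp x hx).2]
  have hfint : Integrable fun τ : ℝ => u₁ τ - Complex.I * (ℓ : ℂ) * u₀ τ :=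
    hfc.integrable_of_hasCompactSupport (HasCompactSupport.intro isCompact_Icc hf0)
  have hu₀cs : HasCompactSupport u₀ :=
    HasCompactSupport.intro isCompact_Icc (fun x hx => (hsupp x hx).1)
  have hdc : Continuous (deriv u₀) := hu₀.continuous_deriv le_rfl
  have hdint : Integrable (deriv u₀) :=
    hdc.integrable_of_hasCompactSupport hu₀cs.deriv
  have key1 : ∀ x : ℝ, (∫ τ in Set.Ioi x, deriv u₀ τ) = -u₀ x :=
    hu₀cs.integral_Ioi_deriv_eq hu₀
  have key2 : ∀ x : ℝ, (∫ τ in Set.Iio x, deriv u₀ τ) = u₀ x := by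
    intro x
    rw [← MeasureTheory.integral_Iic_eq_integral_Iio]
    exact hu₀cs.integral_Iic_deriv_eq hu₀ x
  have keysplit : ∀ x : ℝ,
      (∫ τ in Set.Ioi x, (u₁ τ - Complex.I * (ℓ : ℂ) * u₀ τ)) =
        -∫ τ in Set.Iio x, (u₁ τ - Complex.I * (ℓ : ℂ) * u₀ τ) := by
    intro x
    have h := intervalIntegral.integral_Iic_add_Ioi (μ := volume)
      (f := fun τ : ℝ => u₁ τ - Complex.I * (ℓ : ℂ) * u₀ τ) (b := x)
      hfint.integrableOn hfint.integrableOn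
    rw [hint, MeasureTheory.integral_Iic_eq_integral_Iio] at h
    linear_combination h
  have hin : ∀ x : ℝ, u₀in x =
      (1 / 2 : ℂ) * (u₀ x + ∫ τ in Set.Iio x, (u₁ τ - Complex.I * (ℓ : ℂ) * u₀ τ)) := by
    intro x
    have hsub : (∫ τ in Set.Ioi x,
        (-(deriv u₀ τ) - (u₁ τ - Complex.I * (ℓ : ℂ) * u₀ τ)))
        = (∫ τ in Set.Ioi x, -(deriv u₀ τ))
          - ∫ τ in Set.Ioi x, (u₁ τ - Complex.I * (ℓ : ℂ) * u₀ τ) :=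
      MeasureTheory.integral_sub hdint.neg.integrableOn hfint.integrableOn
    rw [hdef₀in x, hsub, MeasureTheory.integral_neg, key1, keysplit x]
    ring
  have hout : ∀ x : ℝ, u₀out x =
      (1 / 2 : ℂ) * (u₀ x - ∫ τ in Set.Iio x, (u₁ τ - Complex.I * (ℓ : ℂ) * u₀ τ)) := by
    intro x
    have hsub : (∫ τ in Set.Iio x,
        (deriv u₀ τ - (u₁ τ - Complex.I * (ℓ : ℂ) * u₀ τ)))
        = (∫ τ in Set.Iio x, deriv u₀ τ)
          - ∫ τ in Set.Iio x, (u₁ τ - Complex.I * (ℓ : ℂ) * u₀ τ) :=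
      MeasureTheory.integral_sub hdint.integrableOn hfint.integrableOn
    rw [hdef₀out x, hsub, key2]
  have hGderiv : ∀ x : ℝ,
      HasDerivAt (fun y => ∫ τ in Set.Iio y, (u₁ τ - Complex.I * (ℓ : ℂ) * u₀ τ))
        (u₁ x - Complex.I * (ℓ : ℂ) * u₀ x) x := by
    intro x
    have h1 : HasDerivAt (fun y => ∫ τ in (0:ℝ)..y, (u₁ τ - Complex.I * (ℓ : ℂ) * u₀ τ))
        (u₁ x - Complex.I * (ℓ : ℂ) * u₀ x) x :=
      intervalIntegral.integral_hasDerivAt_right hfint.intervalIntegrable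
        (hfc.stronglyMeasurableAtFilter _ _) hfc.continuousAt
    have h2 := h1.const_add (∫ τ in Set.Iio (0:ℝ), (u₁ τ - Complex.I * (ℓ : ℂ) * u₀ τ))
    have h3 : (fun y => (∫ τ in Set.Iio (0:ℝ), (u₁ τ - Complex.I * (ℓ : ℂ) * u₀ τ))
        + ∫ τ in (0:ℝ)..y, (u₁ τ - Complex.I * (ℓ : ℂ) * u₀ τ))
        = fun y => ∫ τ in Set.Iio y, (u₁ τ - Complex.I * (ℓ : ℂ) * u₀ τ) := by
      funext y
      rw [← intervalIntegral.integral_Iic_sub_Iic hfint.integrableOn hfint.integrableOn,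
        MeasureTheory.integral_Iic_eq_integral_Iio, MeasureTheory.integral_Iic_eq_integral_Iio]
      ring
    rwa [h3] at h2
  have hu₀deriv : ∀ x : ℝ, HasDerivAt u₀ (deriv u₀ x) x :=
    fun x => (hu₀.differentiable one_ne_zero x).hasDerivAt
  have hinDeriv : ∀ x : ℝ, HasDerivAt u₀in
      ((1 / 2 : ℂ) * (deriv u₀ x + (u₁ x - Complex.I * (ℓ : ℂ) * u₀ x))) x := by
    intro x
    have h := ((hu₀deriv x).add (hGderiv x)).const_mul (1 / 2 : ℂ)
    exact h.congr_of_eventuallyEq (Filter.Eventually.of_forall fun y => hin y)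
  have houtDeriv : ∀ x : ℝ, HasDerivAt u₀out
      ((1 / 2 : ℂ) * (deriv u₀ x - (u₁ x - Complex.I * (ℓ : ℂ) * u₀ x))) x := by
    intro x
    have h := ((hu₀deriv x).sub (hGderiv x)).const_mul (1 / 2 : ℂ)
    exact h.congr_of_eventuallyEq (Filter.Eventually.of_forall fun y => hout y)
  refine ⟨?_, ?_, ?_, ?_, ?_, ?_⟩
  · intro x
    constructor
    · rw [hin x, hout x]; ring
    · rw [hdef₁in x, hdef₁out x, hin x, hout x]; ring
  · intro x
    rw [(hinDeriv x).deriv, hdef₁in x]; ring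
  · intro x
    rw [(houtDeriv x).deriv, hdef₁out x]; ring
  · have hfz : ∀ x : ℝ, R₂ ≤ x → u₁ x - Complex.I * (ℓ : ℂ) * u₀ x = 0 :=
      zero_of_Ioi hfc (fun x hx => hf0 x (fun hmem => absurd hmem.2 (not_le.2 hx)))
    have hdz : ∀ x : ℝ, R₂ ≤ x → deriv u₀ x = 0 := by
      refine zero_of_Ioi hdc (fun x hx => ?_)
      have h : ∀ᶠ y in nhds x, u₀ y = 0 := by
        filter_upwards [eventually_gt_nhds hx] with y hy
        exact (hsupp y (fun hmem => absurd hmem.2 (not_le.2 hy))).1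
      rw [Filter.EventuallyEq.deriv_eq h]
      exact deriv_const x 0
    intro x hx
    have hz : u₀in x = 0 := by
      rw [hdef₀in x, MeasureTheory.setIntegral_eq_zero_of_forall_eq_zero]
      · ring
      · intro τ hτ
        have hτ2 : R₂ ≤ τ := le_of_lt (lt_of_le_of_lt hx hτ)
        rw [hdz τ hτ2, hfz τ hτ2]
        ring
    refine ⟨hz, ?_⟩
    rw [hdef₁in x, hz]
    linear_combination (1 / 2 : ℂ) * hfz x hx + (1 / 2 : ℂ) * hdz x hx
  · have hfz : ∀ x : ℝ, x ≤ R₁ → u₁ x - Complex.I * (ℓ : ℂ) * u₀ x = 0 :=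
      zero_of_Iio hfc (fun x hx => hf0 x (fun hmem => absurd hmem.1 (not_le.2 hx)))
    have hdz : ∀ x : ℝ, x ≤ R₁ → deriv u₀ x = 0 := by
      refine zero_of_Iio hdc (fun x hx => ?_)
      have h : ∀ᶠ y in nhds x, u₀ y = 0 := by
        filter_upwards [eventually_lt_nhds hx] with y hy
        exact (hsupp y (fun hmem => absurd hmem.1 (not_le.2 hy))).1
      rw [Filter.EventuallyEq.deriv_eq h]
      exact deriv_const x 0
    intro x hx
    have hz : u₀out x = 0 := by
      rw [hdef₀out x, MeasureTheory.setIntegral_eq_zero_of_forall_eq_zero]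
      · ring
      · intro τ hτ
        have hτ2 : τ ≤ R₁ := le_of_lt (lt_of_lt_of_le hτ hx)
        rw [hdz τ hτ2, hfz τ hτ2]
        ring
    refine ⟨hz, ?_⟩
    rw [hdef₁out x, hz]
    linear_combination (1 / 2 : ℂ) * hfz x hx - (1 / 2 : ℂ) * hdz x hx
  · intro v₀ v₁ hv₀ hinq houtq htend x
    have hd0 : ∀ y : ℝ, deriv v₀ y = 0 := by
      intro y
      linear_combination (houtq y - hinq y) / 2
    have hconst : ∀ a b : ℝ, v₀ a = v₀ b := is_const_of_deriv_eq_zero hv₀ hd0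
    have hz : v₀ x = 0 := by
      have h1 : Tendsto v₀ atTop (nhds (v₀ x)) :=
        Tendsto.congr (fun y => (hconst x y)) tendsto_const_nhds
      exact tendsto_nhds_unique h1 htend
    refine ⟨hz, ?_⟩
    rw [hinq x, hd0 x, hz]
    ring
end
end
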